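/- (Filipów–Szuca) Let I be an ideal on ℕ containing all finite sets. The following are equivalent: (i) I has property R: for every conditionally convergent series Σₙ aₙ of real numbers and every r ∈ ℝ ∪ {+∞, −∞} there is a permutation π of ℕ such that the partial sums of Σₙ a_{π(n)} converge to r and {n : π(n) ≠ n} ∈ I; (ii) there is no summable ideal J with I ⊆ J; (iii) I has property W: for every conditionally convergent series Σₙ aₙ of real numbers there exists A ∈ I such that the series Σ_{n∈A} aₙ is conditionally convergent. -/

import Mathlib

open Set Filter Topology

def IsIdeal {X : Type*} (I : Set (Set X)) : Prop :=
  ∅ ∈ I ∧ (Set.univ : Set X) ∉ I ∧ (∀ A B : Set X, A ∈ I → B ∈ I → A ∪ B ∈ I) ∧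
    ∀ A B : Set X, A ⊆ B → B ∈ I → A ∈ I

def ContainsFin {X : Type*} (I : Set (Set X)) : Prop := ∀ A : Set X, A.Finite → A ∈ I

/-- A series `Σ aₙ` is conditionally convergent: its partial sums converge in `ℝ`
but it is not absolutely convergent. -/
def CondConv (a : ℕ → ℝ) : Prop :=
  (∃ l : ℝ, Tendsto (fun N => ∑ n ∈ Finset.range N, a n) atTop (nhds l)) ∧
    ¬ Summable (fun n => |a n|)

/-- Property `R`: every conditionally convergent series can be rearranged, by a
permutation moving only a set of indices in `I`, to converge to any prescribed
`r ∈ ℝ ∪ {+∞, -∞}` (encoded in `EReal`). -/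
def PropertyR (I : Set (Set ℕ)) : Prop :=
  ∀ a : ℕ → ℝ, CondConv a → ∀ r : EReal,
    ∃ π : Equiv.Perm ℕ,
      Tendsto (fun N => ((∑ n ∈ Finset.range N, a (π n) : ℝ) : EReal)) atTop (nhds r) ∧
      {n : ℕ | π n ≠ n} ∈ I

/-- Property `W`: for every conditionally convergent series there is `A ∈ I`
such that the subseries `Σ_{n∈A} aₙ` is conditionally convergent. -/
def PropertyW (I : Set (Set ℕ)) : Prop :=
  ∀ a : ℕ → ℝ, CondConv a → ∃ A ∈ I, CondConv (A.indicator a)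

/-- `I` extends to a summable ideal. -/
def ExtendsToSummable (I : Set (Set ℕ)) : Prop :=
  ∃ f : ℕ → ℝ, (∀ n, 0 ≤ f n) ∧ ¬ Summable f ∧
    I ⊆ {A : Set ℕ | Summable fun n : ↥A => f ↑n}

namespace FS

lemma summable_of_tendsto {f : ℕ → ℝ} (hf : ∀ n, 0 ≤ f n) {l : ℝ}
    (h : Tendsto (fun N => ∑ n ∈ Finset.range N, f n) atTop (nhds l)) : Summable f :=
  (summable_iff_not_tendsto_nat_atTop_of_nonneg hf).2
    (fun hc => not_tendsto_atTop_of_tendsto_nhds h hc)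

lemma tendsto_partial_atTop {f : ℕ → ℝ} (hf : ∀ n, 0 ≤ f n) (h : ¬ Summable f) :
    Tendsto (fun N => ∑ n ∈ Finset.range N, f n) atTop atTop := by
  by_contra hc
  exact h ((summable_iff_not_tendsto_nat_atTop_of_nonneg hf).2 hc)

lemma tendsto_tail_atTop {f : ℕ → ℝ} (hf : ∀ n, 0 ≤ f n) (h : ¬ Summable f) (n₀ : ℕ) :
    Tendsto (fun m => ∑ j ∈ Finset.Ico n₀ m, f j) atTop atTop := by
  have h1 := tendsto_partial_atTop hf h
  have h2 : Tendsto (fun m => (∑ j ∈ Finset.range m, f j) - ∑ j ∈ Finset.range n₀, f j)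
      atTop atTop := tendsto_atTop_add_const_right _ _ h1
  refine h2.congr' ?_
  filter_upwards [eventually_ge_atTop n₀] with m hm
  rw [Finset.sum_Ico_eq_sub _ hm]

lemma condconv_tendsto_zero {a : ℕ → ℝ} (h : CondConv a) : Tendsto a atTop (nhds 0) := by
  obtain ⟨l, hl⟩ := h.1
  have h2 : Tendsto (fun N => ∑ n ∈ Finset.range (N + 1), a n) atTop (nhds l) :=
    hl.comp (tendsto_add_atTop_nat 1)
  have h3 := h2.sub hl
  simp only [Finset.sum_range_succ, add_sub_cancel_left] at h3
  simpa using h3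

lemma condconv_bounded {a : ℕ → ℝ} (h : CondConv a) : ∃ C : ℝ, 2 ≤ C ∧ ∀ n, |a n| ≤ C := by
  have h0 := condconv_tendsto_zero h
  have h1 : ∀ᶠ n in atTop, |a n| ≤ 1 := by
    have := h0.abs
    have h2 := this.eventually (ge_mem_nhds (show |(0:ℝ)| < 1 by norm_num))
    simpa using h2
  obtain ⟨N, hN⟩ := eventually_atTop.1 h1
  refine ⟨2 + ∑ n ∈ Finset.range N, |a n|, ?_, ?_⟩
  · have : (0:ℝ) ≤ ∑ n ∈ Finset.range N, |a n| :=
      Finset.sum_nonneg fun _ _ => abs_nonneg _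
    linarith
  · intro n
    rcases lt_or_ge n N with hn | hn
    · have : |a n| ≤ ∑ m ∈ Finset.range N, |a m| :=
        Finset.single_le_sum (f := fun m => |a m|) (fun _ _ => abs_nonneg _)
          (Finset.mem_range.2 hn)
      linarith
    · have h2 : (0:ℝ) ≤ ∑ m ∈ Finset.range N, |a m| :=
        Finset.sum_nonneg fun _ _ => abs_nonneg _
      have := hN n hn
      linarith

/-- positive and negative parts of a conditionally convergent series diverge -/
lemma condconv_parts {a : ℕ → ℝ} (h : CondConv a) :
    ¬ Summable (fun n => if 0 ≤ a n then a n else 0) ∧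
      ¬ Summable (fun n => if a n < 0 then -a n else 0) := by
  obtain ⟨l, hl⟩ := h.1
  set p := fun n => if 0 ≤ a n then a n else 0 with hp
  set m := fun n => if a n < 0 then -a n else 0 with hm
  have hpnn : ∀ n, 0 ≤ p n := by
    intro n; simp only [hp]; split <;> simp_all
  have hmnn : ∀ n, 0 ≤ m n := by
    intro n; simp only [hm]; split
    · linarith
    · exact le_refl 0
  have habs : ∀ n, |a n| = p n + m n := by
    intro n; simp only [hp, hm]
    rcases le_or_gt 0 (a n) with h' | h'
    · rw [abs_of_nonneg h', if_pos h', if_neg (not_lt.2 h')]; ring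
    · rw [abs_of_neg h', if_neg (not_le.2 h'), if_pos h']; ring
  have hsub : ∀ n, a n = p n - m n := by
    intro n; simp only [hp, hm]
    rcases le_or_gt 0 (a n) with h' | h'
    · rw [if_pos h', if_neg (not_lt.2 h')]; ring
    · rw [if_neg (not_le.2 h'), if_pos h']; ring
  have key : ∀ (hps : Summable p) (hms : Summable m), False := by
    intro hps hms
    exact h.2 (by simpa [funext habs] using hps.add hms)
  constructor
  · intro hps
    apply key hps
    have hpt := hps.hasSum.tendsto_sum_nat
    have : Tendsto (fun N => ∑ n ∈ Finset.range N, p n - ∑ n ∈ Finset.range N, a n)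
        atTop (nhds (∑' n, p n - l)) := hpt.sub hl
    have heq : ∀ N, (∑ n ∈ Finset.range N, p n) - ∑ n ∈ Finset.range N, a n
        = ∑ n ∈ Finset.range N, m n := by
      intro N
      rw [← Finset.sum_sub_distrib]
      exact Finset.sum_congr rfl fun n _ => by rw [hsub n]; ring
    exact summable_of_tendsto hmnn (by simpa [funext heq] using this)
  · intro hms
    refine key ?_ hms
    have hmt := hms.hasSum.tendsto_sum_nat
    have : Tendsto (fun N => ∑ n ∈ Finset.range N, m n + ∑ n ∈ Finset.range N, a n)
        atTop (nhds (∑' n, m n + l)) := hmt.add hl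
    have heq : ∀ N, (∑ n ∈ Finset.range N, m n) + ∑ n ∈ Finset.range N, a n
        = ∑ n ∈ Finset.range N, p n := by
      intro N
      rw [← Finset.sum_add_distrib]
      exact Finset.sum_congr rfl fun n _ => by rw [hsub n]; ring
    exact summable_of_tendsto hpnn (by simpa [funext heq] using this)

lemma sum_filter_eq_count (a : ℕ → ℝ) (p : ℕ → Prop) [DecidablePred p] (M : ℕ) :
    ∑ n ∈ Finset.range M, (if p n then a n else 0) =
      ∑ k ∈ Finset.range (Nat.count p M), a (Nat.nth p k) := by
  induction M with
  | zero => simp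
  | succ M ih =>
    rw [Finset.sum_range_succ, ih, Nat.count_succ]
    by_cases h : p M
    · simp [h, Finset.sum_range_succ, Nat.nth_count h]
    · simp [h]

lemma count_tendsto_atTop {p : ℕ → Prop} [DecidablePred p] (hp : (setOf p).Infinite) :
    Tendsto (fun n => Nat.count p n) atTop atTop := by
  apply tendsto_atTop_atTop_of_monotone (Nat.count_monotone p)
  intro b
  refine ⟨Nat.nth p b + 1, ?_⟩
  have : Nat.count p (Nat.nth p b) = b := Nat.count_nth (fun hf => (hp hf).elim)
  have h2 : Nat.count p (Nat.nth p b) < Nat.count p (Nat.nth p b + 1) := by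
    rw [Nat.count_succ, if_pos (Nat.nth_mem_of_infinite hp b)]; omega
  omega

lemma ereal_tendsto_top {S : ℕ → ℝ} (h : Tendsto S atTop atTop) :
    Tendsto (fun N => ((S N : ℝ) : EReal)) atTop (nhds ⊤) := by
  rw [EReal.tendsto_nhds_top_iff_real]
  intro x
  filter_upwards [h.eventually_gt_atTop x] with N hN
  exact_mod_cast hN

lemma ereal_tendsto_bot {S : ℕ → ℝ} (h : Tendsto S atTop atBot) :
    Tendsto (fun N => ((S N : ℝ) : EReal)) atTop (nhds ⊥) := by
  rw [EReal.tendsto_nhds_bot_iff_real]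
  intro x
  filter_upwards [h.eventually_lt_atBot x] with N hN
  exact_mod_cast hN


/-- one step of the block machine -/
noncomputable def blkStep (g : ℕ → ℝ) (n : ℕ) (st : ℕ × Bool × ℝ) : ℕ × Bool × ℝ :=
  match st with
  | (j, true, s) =>
      let s' := s + min (g n) (1/((j:ℝ)+1) - s)
      if 1/((j:ℝ)+1) ≤ s' then (j, false, s') else (j, true, s')
  | (j, false, s) =>
      let s' := s - min (g n) s
      if s' ≤ 0 then (j+1, true, s') else (j, false, s')

noncomputable def blkSt (g : ℕ → ℝ) : ℕ → ℕ × Bool × ℝ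
  | 0 => (0, true, 0)
  | n+1 => blkStep g n (blkSt g n)

noncomputable def blkJ (g : ℕ → ℝ) (n : ℕ) : ℕ := (blkSt g n).1
noncomputable def blkUp (g : ℕ → ℝ) (n : ℕ) : Bool := (blkSt g n).2.1
noncomputable def blkS (g : ℕ → ℝ) (n : ℕ) : ℝ := (blkSt g n).2.2
noncomputable def blkA (g : ℕ → ℝ) (n : ℕ) : ℝ := blkS g (n+1) - blkS g n

lemma blkS_eq_sum (g : ℕ → ℝ) (N : ℕ) : blkS g N = ∑ n ∈ Finset.range N, blkA g n := by
  simp only [blkA]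
  rw [Finset.sum_range_sub (f := fun n => blkS g n)]
  simp [blkS, blkSt]

variable {g : ℕ → ℝ}

lemma blk_inv (hg : ∀ n, 0 ≤ g n) (n : ℕ) :
    0 ≤ blkS g n ∧ blkS g n ≤ 1/((blkJ g n : ℝ)+1) ∧
      (blkUp g n = true → blkS g n < 1/((blkJ g n : ℝ)+1)) := by
  induction n with
  | zero =>
      refine ⟨le_refl _, by norm_num [blkS, blkJ, blkSt], ?_⟩
      intro _; norm_num [blkS, blkJ, blkSt]
  | succ n ih =>
      rcases hst : blkSt g n with ⟨j, up, s⟩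
      simp only [blkS, blkJ, blkUp, hst] at ih
      obtain ⟨h0, h1, h2⟩ := ih
      have hstep : blkSt g (n+1) = blkStep g n (j, up, s) := by
        rw [show blkSt g (n+1) = blkStep g n (blkSt g n) from rfl, hst]
      cases up with
      | true =>
          have hlt : s < 1/((j:ℝ)+1) := h2 rfl
          have hgap : 0 ≤ 1/((j:ℝ)+1) - s := by linarith
          simp only [blkStep] at hstep
          set s' := s + min (g n) (1/((j:ℝ)+1) - s) with hs'
          have hmin0 : 0 ≤ min (g n) (1/((j:ℝ)+1) - s) := le_min (hg n) hgap
          have hs'0 : 0 ≤ s' := by rw [hs']; linarith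
          have hs'le : s' ≤ 1/((j:ℝ)+1) := by
            have : min (g n) (1/((j:ℝ)+1) - s) ≤ 1/((j:ℝ)+1) - s := min_le_right _ _
            rw [hs']; linarith
          by_cases hc : 1/((j:ℝ)+1) ≤ s'
          · rw [if_pos hc] at hstep
            exact ⟨by simp only [blkS, hstep]; exact hs'0,
              by simp only [blkS, blkJ, hstep]; exact hs'le,
              by simp only [blkUp, hstep]; intro h; exact absurd h (by simp)⟩
          · rw [if_neg hc] at hstep
            exact ⟨by simp only [blkS, hstep]; exact hs'0,
              by simp only [blkS, blkJ, hstep]; exact hs'le,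
              by simp only [blkS, blkJ, blkUp, hstep]; intro _; exact lt_of_not_ge hc⟩
      | false =>
          simp only [blkStep] at hstep
          set s' := s - min (g n) s with hs'
          have hs'0 : 0 ≤ s' := by
            have : min (g n) s ≤ s := min_le_right _ _
            rw [hs']; linarith
          have hs'le : s' ≤ s := by
            have : 0 ≤ min (g n) s := le_min (hg n) h0
            rw [hs']; linarith
          by_cases hc : s' ≤ 0
          · rw [if_pos hc] at hstep
            have hs'eq : s' = 0 := le_antisymm hc hs'0
            refine ⟨by simp only [blkS, hstep]; exact hs'0, ?_, ?_⟩
            · simp only [blkS, blkJ, hstep, hs'eq]; positivity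
            · simp only [blkS, blkJ, blkUp, hstep, hs'eq]; intro _; positivity
          · rw [if_neg hc] at hstep
            refine ⟨by simp only [blkS, hstep]; exact hs'0, ?_, ?_⟩
            · simp only [blkS, blkJ, hstep]; exact le_trans hs'le h1
            · simp only [blkUp, hstep]; intro h; exact absurd h (by simp)


variable {g : ℕ → ℝ}

lemma blk_step_true {n : ℕ} (h : blkUp g n = true) :
    blkA g n = min (g n) (1/((blkJ g n:ℝ)+1) - blkS g n) ∧
    blkJ g (n+1) = blkJ g n ∧
    (blkUp g (n+1) = false ↔
      1/((blkJ g n:ℝ)+1) ≤ blkS g n + min (g n) (1/((blkJ g n:ℝ)+1) - blkS g n)) := by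
  rcases hst : blkSt g n with ⟨j, up, s⟩
  simp only [blkUp, hst] at h
  subst h
  have hstep : blkSt g (n+1) = blkStep g n (j, true, s) := by
    rw [show blkSt g (n+1) = blkStep g n (blkSt g n) from rfl, hst]
  simp only [blkStep] at hstep
  simp only [blkA, blkS, blkJ, blkUp, hst, hstep]
  by_cases hc : 1/((j:ℝ)+1) ≤ s + min (g n) (1/((j:ℝ)+1) - s)
  · rw [if_pos hc]
    refine ⟨by ring, rfl, by simpa using hc⟩
  · rw [if_neg hc]
    refine ⟨by ring, rfl, by simpa using hc⟩

lemma blk_step_false {n : ℕ} (h : blkUp g n = false) :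
    blkA g n = -(min (g n) (blkS g n)) ∧
    ((blkUp g (n+1) = true ∧ blkJ g (n+1) = blkJ g n + 1 ∧ blkS g (n+1) ≤ 0) ∨
     (blkUp g (n+1) = false ∧ blkJ g (n+1) = blkJ g n ∧ ¬ blkS g (n+1) ≤ 0)) := by
  rcases hst : blkSt g n with ⟨j, up, s⟩
  simp only [blkUp, hst] at h
  subst h
  have hstep : blkSt g (n+1) = blkStep g n (j, false, s) := by
    rw [show blkSt g (n+1) = blkStep g n (blkSt g n) from rfl, hst]
  simp only [blkStep] at hstep
  simp only [blkA, blkS, blkJ, blkUp, hst, hstep]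
  by_cases hc : s - min (g n) s ≤ 0
  · rw [if_pos hc]
    exact ⟨by ring, Or.inl ⟨rfl, rfl, by simpa using hc⟩⟩
  · rw [if_neg hc]
    exact ⟨by ring, Or.inr ⟨rfl, rfl, by simpa using hc⟩⟩

lemma blkJ_mono : Monotone (blkJ g) := by
  apply monotone_nat_of_le_succ
  intro n
  cases h : blkUp g n with
  | true => exact le_of_eq (blk_step_true h).2.1.symm
  | false =>
      rcases (blk_step_false h).2 with ⟨_, hj, _⟩ | ⟨_, hj, _⟩ <;> omega

lemma blkA_abs_le (hg : ∀ n, 0 ≤ g n) (n : ℕ) : |blkA g n| ≤ g n := by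
  obtain ⟨h0, h1, h2⟩ := blk_inv hg n
  cases h : blkUp g n with
  | true =>
      rw [(blk_step_true h).1]
      have hgap : 0 ≤ 1/((blkJ g n:ℝ)+1) - blkS g n := by
        have := h2 h; linarith
      rw [abs_of_nonneg (le_min (hg n) hgap)]
      exact min_le_left _ _
  | false =>
      rw [(blk_step_false h).1, abs_neg,
        abs_of_nonneg (le_min (hg n) h0)]
      exact min_le_left _ _

lemma blk_up_flip (hg : ∀ n, 0 ≤ g n) (hns : ¬ Summable g) (n₀ : ℕ)
    (h : blkUp g n₀ = true) : ∃ m, n₀ ≤ m ∧ blkUp g m = false := by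
  by_contra hc
  push_neg at hc
  have hall : ∀ m, n₀ ≤ m → blkUp g m = true := by
    intro m hm
    cases hu : blkUp g m with
    | true => rfl
    | false => exact absurd hu (hc m hm)
  -- along the run, j is constant and s accumulates g
  have hrun : ∀ m, n₀ ≤ m →
      blkJ g m = blkJ g n₀ ∧ blkS g m = blkS g n₀ + ∑ k ∈ Finset.Ico n₀ m, g k := by
    intro m hm
    induction m, hm using Nat.le_induction with
    | base => simp
    | succ m hm ih =>
        obtain ⟨hj, hs⟩ := ih
        obtain ⟨ha, hj', hiff⟩ := blk_step_true (hall m hm)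
        have hnoflip : ¬ (1/((blkJ g m:ℝ)+1) ≤
            blkS g m + min (g m) (1/((blkJ g m:ℝ)+1) - blkS g m)) := by
          intro hcc
          have := hiff.2 hcc
          rw [hall (m+1) (by omega)] at this
          exact absurd this (by simp)
        have hmin : min (g m) (1/((blkJ g m:ℝ)+1) - blkS g m) = g m := by
          rcases min_cases (g m) (1/((blkJ g m:ℝ)+1) - blkS g m) with ⟨he, _⟩ | ⟨he, hle⟩
          · exact he
          · exfalso; apply hnoflip; rw [he]; linarith
        have hs' : blkS g (m+1) = blkS g m + g m := by
          have : blkA g m = g m := by rw [ha, hmin]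
          have := this; rw [blkA] at this; linarith
        constructor
        · rw [hj', hj]
        · rw [hs', hs, Finset.sum_Ico_succ_top hm]
          ring
  -- but then s would exceed the threshold
  have htail := tendsto_tail_atTop hg hns n₀
  have hev : ∀ᶠ m in atTop, 1/((blkJ g n₀:ℝ)+1) - blkS g n₀ <
      ∑ k ∈ Finset.Ico n₀ m, g k := htail.eventually_gt_atTop _
  obtain ⟨m, hm1, hm2⟩ := (hev.and (eventually_ge_atTop n₀)).exists
  obtain ⟨hj, hs⟩ := hrun m hm2
  have hinv := (blk_inv hg m).2.1
  rw [hj] at hinv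
  rw [hs] at hinv
  linarith

lemma blk_down_flip (hg : ∀ n, 0 ≤ g n) (hns : ¬ Summable g) (n₀ : ℕ)
    (h : blkUp g n₀ = false) : ∃ m, n₀ ≤ m ∧ blkUp g m = true := by
  by_contra hc
  push_neg at hc
  have hall : ∀ m, n₀ ≤ m → blkUp g m = false := by
    intro m hm
    cases hu : blkUp g m with
    | false => rfl
    | true => exact absurd hu (hc m hm)
  have hrun : ∀ m, n₀ ≤ m →
      blkS g m = blkS g n₀ - ∑ k ∈ Finset.Ico n₀ m, g k := by
    intro m hm
    induction m, hm using Nat.le_induction with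
    | base => simp
    | succ m hm ih =>
        obtain ⟨ha, hor⟩ := blk_step_false (hall m hm)
        rcases hor with ⟨hu, _, _⟩ | ⟨_, _, hns'⟩
        · rw [hall (m+1) (by omega)] at hu; exact absurd hu (by simp)
        · have hmin : min (g m) (blkS g m) = g m := by
            rcases min_cases (g m) (blkS g m) with ⟨he, _⟩ | ⟨he, hle⟩
            · exact he
            · exfalso; apply hns'
              have : blkA g m = -(blkS g m) := by rw [ha, he]
              rw [blkA] at this; linarith
          have hs' : blkS g (m+1) = blkS g m - g m := by
            have : blkA g m = -(g m) := by rw [ha, hmin]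
            rw [blkA] at this; linarith
          rw [hs', ih, Finset.sum_Ico_succ_top hm]
          ring
  have htail := tendsto_tail_atTop hg hns n₀
  have hev : ∀ᶠ m in atTop, blkS g n₀ < ∑ k ∈ Finset.Ico n₀ m, g k :=
    htail.eventually_gt_atTop _
  obtain ⟨m, hm1, hm2⟩ := (hev.and (eventually_ge_atTop n₀)).exists
  have hinv := (blk_inv hg m).1
  rw [hrun m hm2] at hinv
  linarith

lemma blkJ_lt_of_down_up {p q : ℕ} (hp : blkUp g p = false) (hq : blkUp g q = true)
    (hpq : p ≤ q) : blkJ g p < blkJ g q := by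
  induction q with
  | zero =>
      interval_cases p
      rw [hp] at hq; exact absurd hq (by simp)
  | succ q ih =>
      have hpq' : p ≤ q := by
        rcases Nat.lt_or_ge p (q+1) with h | h
        · omega
        · exfalso; have : p = q + 1 := by omega
          subst this; rw [hp] at hq; exact absurd hq (by simp)
      cases hu : blkUp g q with
      | true => exact lt_of_lt_of_le (ih hu hpq') (blkJ_mono (by omega))
      | false =>
          rcases (blk_step_false hu).2 with ⟨_, hj, _⟩ | ⟨hu', _, _⟩
          · have := blkJ_mono (g:=g) hpq'
            omega
          · rw [hu'] at hq; exact absurd hq (by simp)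

lemma blkJ_tendsto (hg : ∀ n, 0 ≤ g n) (hns : ¬ Summable g) :
    Tendsto (blkJ g) atTop atTop := by
  apply tendsto_atTop_atTop_of_monotone blkJ_mono
  suffices h : ∀ n : ℕ, ∃ m, n ≤ m ∧ blkJ g n < blkJ g m by
    intro b
    induction b with
    | zero => exact ⟨0, Nat.zero_le _⟩
    | succ b ihb =>
        obtain ⟨n, hn⟩ := ihb
        obtain ⟨m, hm1, hm2⟩ := h n
        exact ⟨m, by omega⟩
  intro n
  -- reach a down state
  have hdown : ∃ p, n ≤ p ∧ blkUp g p = false := by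
    cases hu : blkUp g n with
    | false => exact ⟨n, le_refl n, hu⟩
    | true => exact blk_up_flip hg hns n hu
  obtain ⟨p, hp1, hp2⟩ := hdown
  obtain ⟨q, hq1, hq2⟩ := blk_down_flip hg hns p hp2
  refine ⟨q, by omega, ?_⟩
  calc blkJ g n ≤ blkJ g p := blkJ_mono hp1
    _ < blkJ g q := blkJ_lt_of_down_up hp2 hq2 hq1



noncomputable def harm (j : ℕ) : ℝ := ∑ i ∈ Finset.range j, 1/((i:ℝ)+1)

lemma harm_succ (j : ℕ) : harm (j+1) = harm j + 1/((j:ℝ)+1) := Finset.sum_range_succ _ _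

lemma harm_tendsto : Tendsto harm atTop atTop :=
  Real.tendsto_sum_range_one_div_nat_succ_atTop

lemma blkS_tendsto_zero (hg : ∀ n, 0 ≤ g n) (hns : ¬ Summable g) :
    Tendsto (blkS g) atTop (nhds 0) := by
  have hj := blkJ_tendsto hg hns
  have hup : Tendsto (fun n => 1/((blkJ g n : ℝ)+1)) atTop (nhds 0) :=
    tendsto_one_div_add_atTop_nhds_zero_nat.comp hj
  exact tendsto_of_tendsto_of_tendsto_of_le_of_le tendsto_const_nhds hup
    (fun n => (blk_inv hg n).1) (fun n => (blk_inv hg n).2.1)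

lemma blk_div_inv (hg : ∀ n, 0 ≤ g n) (n : ℕ) :
    (blkUp g n = true → ∑ k ∈ Finset.range n, |blkA g k| ≥ 2 * harm (blkJ g n) + blkS g n) ∧
    (blkUp g n = false → ∑ k ∈ Finset.range n, |blkA g k| ≥
      2 * harm (blkJ g n) + 2/((blkJ g n:ℝ)+1) - blkS g n) := by
  induction n with
  | zero =>
      constructor
      · intro _
        simp [harm, blkS, blkJ, blkSt]
      · intro h
        simp only [blkUp, blkSt] at h
        exact absurd h (by simp)
  | succ n ih =>
      have hT : ∑ k ∈ Finset.range (n+1), |blkA g k|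
          = (∑ k ∈ Finset.range n, |blkA g k|) + |blkA g n| := Finset.sum_range_succ _ _
      obtain ⟨hinv0, hinv1, hinv2⟩ := blk_inv hg n
      have h2 : 2/((blkJ g n:ℝ)+1) = 2*(1/((blkJ g n:ℝ)+1)) := by ring
      cases hu : blkUp g n with
      | true =>
          have h1 := ih.1 hu
          obtain ⟨ha, hj, hiff⟩ := blk_step_true hu
          have hgap : 0 ≤ 1/((blkJ g n:ℝ)+1) - blkS g n := by
            have := hinv2 hu; linarith
          have hA0 : 0 ≤ blkA g n := by rw [ha]; exact le_min (hg n) hgap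
          have habs : |blkA g n| = blkA g n := abs_of_nonneg hA0
          have hsa : blkS g (n+1) = blkS g n + blkA g n := by rw [blkA]; ring
          constructor
          · intro _
            rw [hT, habs, hj, hsa]; linarith
          · intro hu'
            have hth := hiff.1 hu'
            rw [← ha] at hth
            rw [hT, habs, hj, hsa]
            linarith
      | false =>
          have h1 := ih.2 hu
          obtain ⟨ha, hor⟩ := blk_step_false hu
          have hA0 : blkA g n ≤ 0 := by rw [ha, neg_nonpos]; exact le_min (hg n) hinv0
          have habs : |blkA g n| = -(blkA g n) := abs_of_nonpos hA0
          have hsa : blkS g (n+1) = blkS g n + blkA g n := by rw [blkA]; ring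
          rcases hor with ⟨hu', hj, hs0⟩ | ⟨hu', hj, hs0⟩
          · constructor
            · intro _
              rw [hsa] at hs0
              rw [hT, habs, hj, harm_succ, hsa]
              linarith
            · intro hcc; rw [hu'] at hcc; exact absurd hcc (by simp)
          · constructor
            · intro hcc; rw [hu'] at hcc; exact absurd hcc (by simp)
            · intro _
              rw [hT, habs, hj, hsa]
              linarith

lemma blk_diverges (hg : ∀ n, 0 ≤ g n) (hns : ¬ Summable g) :
    ¬ Summable (fun n => |blkA g n|) := by
  intro hs
  have hbd : ∀ n, ∑ k ∈ Finset.range n, |blkA g k| ≤ ∑' k, |blkA g k| :=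
    fun n => Summable.sum_le_tsum _ (fun k _ => abs_nonneg _) hs
  have hge : ∀ n, 2 * harm (blkJ g n) - 1 ≤ ∑ k ∈ Finset.range n, |blkA g k| := by
    intro n
    obtain ⟨hinv0, hinv1, _⟩ := blk_inv hg n
    have hj1 : 1/((blkJ g n:ℝ)+1) ≤ 1 := by
      rw [div_le_one (by positivity)]
      have : (0:ℝ) ≤ (blkJ g n : ℝ) := Nat.cast_nonneg _
      linarith
    have hj0 : 0 ≤ 1/((blkJ g n:ℝ)+1) := by positivity
    have h2 : 2/((blkJ g n:ℝ)+1) = 2*(1/((blkJ g n:ℝ)+1)) := by ring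
    cases hu : blkUp g n with
    | true =>
        have := (blk_div_inv hg n).1 hu
        linarith
    | false =>
        have := (blk_div_inv hg n).2 hu
        linarith
  have hat : Tendsto (fun n => 2 * harm (blkJ g n) - 1) atTop atTop := by
    apply tendsto_atTop_add_const_right
    exact (harm_tendsto.comp (blkJ_tendsto hg hns)).const_mul_atTop (by norm_num)
  obtain ⟨n, hn⟩ := (hat.eventually_gt_atTop (∑' k, |blkA g k|)).exists
  exact absurd (le_trans (hge n) (hbd n)) (not_le.2 hn)

/-- Part 1: a conditionally convergent series dominated by any nonneg non-summable function. -/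
lemma exists_condConv_le (hg : ∀ n, 0 ≤ g n) (hns : ¬ Summable g) :
    ∃ a : ℕ → ℝ, CondConv a ∧ ∀ n, |a n| ≤ g n := by
  refine ⟨blkA g, ⟨⟨0, ?_⟩, blk_diverges hg hns⟩, blkA_abs_le hg⟩
  have := blkS_tendsto_zero hg hns
  refine this.congr ?_
  intro N
  exact blkS_eq_sum g N


/-! ### Machine 2 : greedy subset selection -/

noncomputable def grdPos (a : ℕ → ℝ) (d : ℕ → Bool) (n : ℕ) : ℝ :=
  if d n = true ∧ 0 < a n then a n else 0

noncomputable def grdNeg (a : ℕ → ℝ) (d : ℕ → Bool) (n : ℕ) : ℝ :=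
  if d n = true ∧ a n < 0 then a n else 0

noncomputable def grdStep (a : ℕ → ℝ) (d : ℕ → Bool) (n : ℕ) (st : ℕ × Bool × ℝ) :
    ℕ × Bool × ℝ :=
  match st with
  | (k, true, s) =>
      let s' := s + grdPos a d n
      if 1/((k:ℝ)+1) < s' then (k, false, s') else (k, true, s')
  | (k, false, s) =>
      let s' := s + grdNeg a d n
      if s' ≤ 0 then (k+1, true, s') else (k, false, s')

noncomputable def grdSt (a : ℕ → ℝ) (d : ℕ → Bool) : ℕ → ℕ × Bool × ℝ
  | 0 => (0, true, 0)
  | n+1 => grdStep a d n (grdSt a d n)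

noncomputable def grdK (a : ℕ → ℝ) (d : ℕ → Bool) (n : ℕ) : ℕ := (grdSt a d n).1
noncomputable def grdUp (a : ℕ → ℝ) (d : ℕ → Bool) (n : ℕ) : Bool := (grdSt a d n).2.1
noncomputable def grdS (a : ℕ → ℝ) (d : ℕ → Bool) (n : ℕ) : ℝ := (grdSt a d n).2.2
noncomputable def grdA (a : ℕ → ℝ) (d : ℕ → Bool) (n : ℕ) : ℝ :=
  grdS a d (n+1) - grdS a d n

variable {a : ℕ → ℝ} {d : ℕ → Bool}

lemma grdS_eq_sum (N : ℕ) : grdS a d N = ∑ n ∈ Finset.range N, grdA a d n := by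
  simp only [grdA]
  rw [Finset.sum_range_sub (f := fun n => grdS a d n)]
  simp [grdS, grdSt]

lemma grdPos_nonneg (n : ℕ) : 0 ≤ grdPos a d n := by
  rw [grdPos]; split
  · next h => exact le_of_lt h.2
  · exact le_refl 0

lemma grdNeg_nonpos (n : ℕ) : grdNeg a d n ≤ 0 := by
  rw [grdNeg]; split
  · next h => exact le_of_lt h.2
  · exact le_refl 0

lemma grdPos_le_abs (n : ℕ) : grdPos a d n ≤ |a n| := by
  rw [grdPos]; split
  · exact le_abs_self _
  · exact abs_nonneg _

lemma grdNeg_ge_neg_abs (n : ℕ) : -|a n| ≤ grdNeg a d n := by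
  rw [grdNeg]; split
  · exact neg_abs_le _
  · simp

lemma grd_step_true {n : ℕ} (h : grdUp a d n = true) :
    grdA a d n = grdPos a d n ∧ grdK a d (n+1) = grdK a d n ∧
    grdS a d (n+1) = grdS a d n + grdPos a d n ∧
    (grdUp a d (n+1) = false ↔ 1/((grdK a d n:ℝ)+1) < grdS a d n + grdPos a d n) := by
  rcases hst : grdSt a d n with ⟨k, up, s⟩
  simp only [grdUp, hst] at h
  subst h
  have hstep : grdSt a d (n+1) = grdStep a d n (k, true, s) := by
    rw [show grdSt a d (n+1) = grdStep a d n (grdSt a d n) from rfl, hst]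
  simp only [grdStep] at hstep
  simp only [grdA, grdS, grdK, grdUp, hst, hstep]
  by_cases hc : 1/((k:ℝ)+1) < s + grdPos a d n
  · rw [if_pos hc]
    refine ⟨by ring, rfl, rfl, by simpa using hc⟩
  · rw [if_neg hc]
    refine ⟨by ring, rfl, rfl, by simpa using hc⟩

lemma grd_step_false {n : ℕ} (h : grdUp a d n = false) :
    grdA a d n = grdNeg a d n ∧
    grdS a d (n+1) = grdS a d n + grdNeg a d n ∧
    ((grdUp a d (n+1) = true ∧ grdK a d (n+1) = grdK a d n + 1 ∧ grdS a d (n+1) ≤ 0) ∨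
     (grdUp a d (n+1) = false ∧ grdK a d (n+1) = grdK a d n ∧ ¬ grdS a d (n+1) ≤ 0)) := by
  rcases hst : grdSt a d n with ⟨k, up, s⟩
  simp only [grdUp, hst] at h
  subst h
  have hstep : grdSt a d (n+1) = grdStep a d n (k, false, s) := by
    rw [show grdSt a d (n+1) = grdStep a d n (grdSt a d n) from rfl, hst]
  simp only [grdStep] at hstep
  simp only [grdA, grdS, grdK, grdUp, hst, hstep]
  by_cases hc : s + grdNeg a d n ≤ 0
  · rw [if_pos hc]
    exact ⟨by ring, rfl, Or.inl ⟨rfl, rfl, by simpa using hc⟩⟩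
  · rw [if_neg hc]
    exact ⟨by ring, rfl, Or.inr ⟨rfl, rfl, by simpa using hc⟩⟩

lemma grdK_mono : Monotone (grdK a d) := by
  apply monotone_nat_of_le_succ
  intro n
  cases h : grdUp a d n with
  | true => exact le_of_eq (grd_step_true h).2.1.symm
  | false =>
      rcases (grd_step_false h).2.2 with ⟨_, hj, _⟩ | ⟨_, hj, _⟩ <;> omega

section GrdInv
variable {C : ℝ} (hC : ∀ n, |a n| ≤ C) (hC0 : 0 ≤ C)
include hC hC0

lemma grd_inv (n : ℕ) :
    (grdUp a d n = true → grdS a d n ≤ 1/((grdK a d n:ℝ)+1)) ∧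
    (grdUp a d n = false → 0 < grdS a d n ∧ grdS a d n ≤ 1/((grdK a d n:ℝ)+1) + C) ∧
    (-C ≤ grdS a d n) := by
  have hpos_le : ∀ m, grdPos a d m ≤ C := by
    intro m
    rw [grdPos]; split
    · exact le_trans (le_abs_self _) (hC m)
    · exact hC0
  have hneg_ge : ∀ m, -C ≤ grdNeg a d m := by
    intro m
    rw [grdNeg]; split
    · exact le_trans (neg_le_neg (hC m)) (neg_abs_le _)
    · linarith
  induction n with
  | zero =>
      refine ⟨fun _ => by norm_num [grdS, grdK, grdSt], fun h => ?_, by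
        simp only [grdS, grdSt]; linarith⟩
      simp only [grdUp, grdSt] at h
      exact absurd h (by simp)
  | succ n ih =>
      obtain ⟨ih1, ih2, ih3⟩ := ih
      cases hu : grdUp a d n with
      | true =>
          have hs := ih1 hu
          obtain ⟨ha, hk, hss, hiff⟩ := grd_step_true hu
          refine ⟨?_, ?_, ?_⟩
          · intro hu'
            have hc : ¬ (1/((grdK a d n:ℝ)+1) < grdS a d n + grdPos a d n) := by
              intro hcc
              rw [hiff.2 hcc] at hu'
              exact absurd hu' (by simp)
            rw [hss, hk]
            linarith [not_lt.1 hc]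
          · intro hu'
            have hcc := hiff.1 hu'
            have h0 : (0:ℝ) < 1/((grdK a d n:ℝ)+1) := by positivity
            constructor
            · rw [hss]; linarith
            · rw [hss, hk]
              have := hpos_le n
              linarith
          · rw [hss]
            have := grdPos_nonneg (a:=a) (d:=d) n
            linarith
      | false =>
          obtain ⟨hs0, hs1⟩ := ih2 hu
          obtain ⟨ha, hss, hor⟩ := grd_step_false hu
          have hlow : -C ≤ grdS a d (n+1) := by
            rw [hss]
            have := hneg_ge n
            linarith
          rcases hor with ⟨hu', hk, hsl⟩ | ⟨hu', hk, hsl⟩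
          · refine ⟨?_, ?_, hlow⟩
            · intro _
              rw [hk]
              have : (0:ℝ) < 1/((grdK a d n:ℝ)+1+1) := by positivity
              have hcast : ((grdK a d n + 1 : ℕ):ℝ) = (grdK a d n : ℝ) + 1 := by
                push_cast; ring
              rw [hcast]
              linarith
            · intro hcc
              rw [hu'] at hcc
              exact absurd hcc (by simp)
          · refine ⟨?_, ?_, hlow⟩
            · intro hcc
              rw [hu'] at hcc
              exact absurd hcc (by simp)
            · intro _
              rw [hk]
              constructor
              · linarith [lt_of_not_ge hsl]
              · rw [hss]
                have := grdNeg_nonpos (a:=a) (d:=d) n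
                linarith

end GrdInv


lemma grdK_lt_of_down_up {p q : ℕ} (hp : grdUp a d p = false) (hq : grdUp a d q = true)
    (hpq : p ≤ q) : grdK a d p < grdK a d q := by
  induction q with
  | zero =>
      interval_cases p
      rw [hp] at hq; exact absurd hq (by simp)
  | succ q ih =>
      have hpq' : p ≤ q := by
        rcases Nat.lt_or_ge p (q+1) with h' | h'
        · omega
        · exfalso; have : p = q + 1 := by omega
          subst this; rw [hp] at hq; exact absurd hq (by simp)
      cases hu : grdUp a d q with
      | true => exact lt_of_lt_of_le (ih hu hpq') (grdK_mono (a:=a) (d:=d) (by omega))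
      | false =>
          rcases (grd_step_false hu).2.2 with ⟨_, hj, _⟩ | ⟨hu', _, _⟩
          · have := grdK_mono (a:=a) (d:=d) hpq'
            omega
          · rw [hu'] at hq; exact absurd hq (by simp)

lemma grd_down_up_switch {p q : ℕ} (hp : grdUp a d p = false) (hq : grdUp a d q = true)
    (hpq : p ≤ q) : ∃ m, p ≤ m ∧ grdUp a d m = false ∧ grdUp a d (m+1) = true := by
  induction q with
  | zero =>
      interval_cases p
      rw [hp] at hq; exact absurd hq (by simp)
  | succ q ih =>
      have hpq' : p ≤ q := by
        rcases Nat.lt_or_ge p (q+1) with h' | h'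
        · omega
        · exfalso; have : p = q + 1 := by omega
          subst this; rw [hp] at hq; exact absurd hq (by simp)
      cases hu : grdUp a d q with
      | true => exact ih hu hpq'
      | false => exact ⟨q, hpq', hu, hq⟩

section GrdRun
variable {C : ℝ} (hC : ∀ n, |a n| ≤ C) (hC0 : 0 ≤ C)
variable (hpos : ¬ Summable (grdPos a d)) (hneg : ¬ Summable (fun n => -(grdNeg a d n)))
include hC hC0 hpos hneg


lemma grd_up_flip (n₀ : ℕ) (h : grdUp a d n₀ = true) :
    ∃ m, n₀ ≤ m ∧ grdUp a d m = false := by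
  by_contra hc
  push_neg at hc
  have hall : ∀ m, n₀ ≤ m → grdUp a d m = true := by
    intro m hm
    cases hu : grdUp a d m with
    | true => rfl
    | false => exact absurd hu (hc m hm)
  have hrun : ∀ m, n₀ ≤ m →
      grdK a d m = grdK a d n₀ ∧
        grdS a d m = grdS a d n₀ + ∑ j ∈ Finset.Ico n₀ m, grdPos a d j := by
    intro m hm
    induction m, hm using Nat.le_induction with
    | base => simp
    | succ m hm ih =>
        obtain ⟨hk, hs⟩ := ih
        obtain ⟨_, hk', hss, _⟩ := grd_step_true (hall m hm)
        exact ⟨by rw [hk', hk], by rw [hss, hs, Finset.sum_Ico_succ_top hm]; ring⟩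
  have htail := tendsto_tail_atTop (fun n => grdPos_nonneg n) hpos n₀
  have hev : ∀ᶠ m in atTop, 1/((grdK a d n₀:ℝ)+1) - grdS a d n₀ <
      ∑ j ∈ Finset.Ico n₀ m, grdPos a d j := htail.eventually_gt_atTop _
  obtain ⟨m, hm1, hm2⟩ := (hev.and (eventually_ge_atTop n₀)).exists
  obtain ⟨hk, hs⟩ := hrun m hm2
  have hinv := (grd_inv hC hC0 m).1 (hall m hm2)
  rw [hk, hs] at hinv
  linarith

lemma grd_down_flip (n₀ : ℕ) (h : grdUp a d n₀ = false) :
    ∃ m, n₀ ≤ m ∧ grdUp a d m = true := by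
  by_contra hc
  push_neg at hc
  have hall : ∀ m, n₀ ≤ m → grdUp a d m = false := by
    intro m hm
    cases hu : grdUp a d m with
    | false => rfl
    | true => exact absurd hu (hc m hm)
  have hrun : ∀ m, n₀ ≤ m →
      grdS a d m = grdS a d n₀ - ∑ j ∈ Finset.Ico n₀ m, -(grdNeg a d j) := by
    intro m hm
    induction m, hm using Nat.le_induction with
    | base => simp
    | succ m hm ih =>
        obtain ⟨_, hss, _⟩ := grd_step_false (hall m hm)
        rw [hss, ih, Finset.sum_Ico_succ_top hm]
        ring
  have htail := tendsto_tail_atTop (fun n => by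
      have := grdNeg_nonpos (a:=a) (d:=d) n; linarith) hneg n₀
  have hev : ∀ᶠ m in atTop, grdS a d n₀ <
      ∑ j ∈ Finset.Ico n₀ m, -(grdNeg a d j) := htail.eventually_gt_atTop _
  obtain ⟨m, hm1, hm2⟩ := (hev.and (eventually_ge_atTop n₀)).exists
  have hinv := ((grd_inv hC hC0 m).2.1 (hall m hm2)).1
  rw [hrun m hm2] at hinv
  linarith



lemma grdK_tendsto : Tendsto (grdK a d) atTop atTop := by
  apply tendsto_atTop_atTop_of_monotone grdK_mono
  suffices h : ∀ n : ℕ, ∃ m, n ≤ m ∧ grdK a d n < grdK a d m by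
    intro b
    induction b with
    | zero => exact ⟨0, Nat.zero_le _⟩
    | succ b ihb =>
        obtain ⟨n, hn⟩ := ihb
        obtain ⟨m, hm1, hm2⟩ := h n
        exact ⟨m, by omega⟩
  intro n
  have hdown : ∃ p, n ≤ p ∧ grdUp a d p = false := by
    cases hu : grdUp a d n with
    | false => exact ⟨n, le_refl n, hu⟩
    | true => exact grd_up_flip hC hC0 hpos hneg n hu
  obtain ⟨p, hp1, hp2⟩ := hdown
  obtain ⟨q, hq1, hq2⟩ := grd_down_flip hC hC0 hpos hneg p hp2
  refine ⟨q, by omega, ?_⟩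
  calc grdK a d n ≤ grdK a d p := grdK_mono (a:=a) (d:=d) hp1
    _ < grdK a d q := grdK_lt_of_down_up hp2 hq2 hq1

lemma grdS_small (ha : Tendsto a atTop (nhds 0)) {ε : ℝ} (hε : 0 < ε) :
    ∃ N, ∀ n, N ≤ n → |grdS a d n| ≤ 2*ε := by
  -- choose a point past which terms are small and thresholds are small
  have hterm : ∀ᶠ n in atTop, |a n| < ε := by
    have := ha.abs
    simpa using this.eventually (gt_mem_nhds (by simpa using hε))
  have hth : ∀ᶠ n in atTop, (1:ℝ)/((grdK a d n:ℝ)+1) < ε := by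
    have h1 : Tendsto (fun n => 1/((grdK a d n : ℝ)+1)) atTop (nhds 0) :=
      tendsto_one_div_add_atTop_nhds_zero_nat.comp (grdK_tendsto hC hC0 hpos hneg)
    simpa using h1.eventually (gt_mem_nhds (by simpa using hε))
  obtain ⟨n₀, hn₀⟩ := eventually_atTop.1 (hterm.and hth)
  -- find a down → up switch past n₀
  have hdown : ∃ p, n₀ ≤ p ∧ grdUp a d p = false := by
    cases hu : grdUp a d n₀ with
    | false => exact ⟨n₀, le_refl _, hu⟩
    | true => exact grd_up_flip hC hC0 hpos hneg n₀ hu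
  obtain ⟨p, hp1, hp2⟩ := hdown
  obtain ⟨q, hq1, hq2⟩ := grd_down_flip hC hC0 hpos hneg p hp2
  obtain ⟨m, hm1, hm2, hm3⟩ := grd_down_up_switch hp2 hq2 hq1
  have hmn₀ : n₀ ≤ m := le_trans hp1 hm1
  have habs : ∀ n, m+1 ≤ n → -ε ≤ grdS a d n ∧ grdS a d n ≤ 2*ε := by
    intro n hn
    induction n, hn using Nat.le_induction with
    | base =>
        obtain ⟨_, hss, hor⟩ := grd_step_false hm2
        have hs0 : 0 < grdS a d m := ((grd_inv hC hC0 m).2.1 hm2).1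
        have hterm' : -ε < grdNeg a d m := by
          have h1 := (hn₀ m hmn₀).1
          have h2 := grdNeg_ge_neg_abs (a:=a) (d:=d) m
          linarith [abs_nonneg (a m)]
        constructor
        · rw [hss]; linarith
        · rcases hor with ⟨_, _, hsl⟩ | ⟨hu', _, _⟩
          · linarith
          · rw [hu'] at hm3; exact absurd hm3 (by simp)
    | succ n hn ih =>
        have hn₀' : n₀ ≤ n := by omega
        obtain ⟨ihl, ihr⟩ := ih
        cases hu : grdUp a d n with
        | true =>
            obtain ⟨_, _, hss, _⟩ := grd_step_true hu
            have h1 : grdS a d n ≤ 1/((grdK a d n:ℝ)+1) := (grd_inv hC hC0 n).1 hu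
            have h2 : (1:ℝ)/((grdK a d n:ℝ)+1) < ε := (hn₀ n hn₀').2
            have h3 : grdPos a d n < ε := by
              have := grdPos_le_abs (a:=a) (d:=d) n
              have := (hn₀ n hn₀').1
              linarith
            have h4 := grdPos_nonneg (a:=a) (d:=d) n
            constructor
            · rw [hss]; linarith
            · rw [hss]; linarith
        | false =>
            obtain ⟨_, hss, _⟩ := grd_step_false hu
            have h1 : 0 < grdS a d n := ((grd_inv hC hC0 n).2.1 hu).1
            have h2 : -ε < grdNeg a d n := by
              have := grdNeg_ge_neg_abs (a:=a) (d:=d) n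
              have := (hn₀ n hn₀').1
              linarith
            have h3 := grdNeg_nonpos (a:=a) (d:=d) n
            constructor
            · rw [hss]; linarith
            · rw [hss]; linarith
  refine ⟨m+1, fun n hn => ?_⟩
  obtain ⟨h1, h2⟩ := habs n hn
  rw [abs_le]
  constructor <;> linarith

end GrdRun


section GrdFinal
variable {C : ℝ} (hC : ∀ n, |a n| ≤ C) (hC0 : 0 ≤ C)
variable (hpos : ¬ Summable (grdPos a d)) (hneg : ¬ Summable (fun n => -(grdNeg a d n)))
include hC hC0 hpos hneg

lemma grdS_tendsto_zero (ha : Tendsto a atTop (nhds 0)) :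
    Tendsto (grdS a d) atTop (nhds 0) := by
  rw [Metric.tendsto_atTop]
  intro ε hε
  obtain ⟨N, hN⟩ := grdS_small hC hC0 hpos hneg ha (show (0:ℝ) < ε/3 by linarith)
  refine ⟨N, fun n hn => ?_⟩
  have := hN n hn
  rw [Real.dist_eq, sub_zero]
  linarith

omit hpos hneg in
lemma grd_div_inv (n : ℕ) :
    (grdUp a d n = true → ∑ k ∈ Finset.range n, |grdA a d k| ≥
      2 * harm (grdK a d n) + grdS a d n) ∧
    (grdUp a d n = false → ∑ k ∈ Finset.range n, |grdA a d k| ≥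
      2 * harm (grdK a d n) + 2/((grdK a d n:ℝ)+1) - grdS a d n) := by
  induction n with
  | zero =>
      constructor
      · intro _
        simp [harm, grdS, grdK, grdSt]
      · intro h
        simp only [grdUp, grdSt] at h
        exact absurd h (by simp)
  | succ n ih =>
      have hT : ∑ k ∈ Finset.range (n+1), |grdA a d k|
          = (∑ k ∈ Finset.range n, |grdA a d k|) + |grdA a d n| := Finset.sum_range_succ _ _
      have h2 : 2/((grdK a d n:ℝ)+1) = 2*(1/((grdK a d n:ℝ)+1)) := by ring
      have h0 : (0:ℝ) < 1/((grdK a d n:ℝ)+1) := by positivity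
      cases hu : grdUp a d n with
      | true =>
          have h1 := ih.1 hu
          obtain ⟨ha', hk, hss, hiff⟩ := grd_step_true hu
          have habs : |grdA a d n| = grdA a d n := abs_of_nonneg (by
            rw [ha']; exact grdPos_nonneg n)
          constructor
          · intro _
            rw [hT, habs, hk, hss, ha']
            linarith
          · intro hu'
            have hth := hiff.1 hu'
            rw [hT, habs, hk, hss, ha']
            linarith
      | false =>
          have h1 := ih.2 hu
          obtain ⟨ha', hss, hor⟩ := grd_step_false hu
          have habs : |grdA a d n| = -(grdA a d n) := abs_of_nonpos (by
            rw [ha']; exact grdNeg_nonpos n)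
          rcases hor with ⟨hu', hk, hsl⟩ | ⟨hu', hk, hsl⟩
          · constructor
            · intro _
              rw [hss] at hsl
              rw [hT, habs, hk, harm_succ, hss, ha']
              linarith
            · intro hcc; rw [hu'] at hcc; exact absurd hcc (by simp)
          · constructor
            · intro hcc; rw [hu'] at hcc; exact absurd hcc (by simp)
            · intro _
              rw [hT, habs, hk, hss, ha']
              linarith

lemma grd_diverges : ¬ Summable (fun n => |grdA a d n|) := by
  intro hs
  have hbd : ∀ n, ∑ k ∈ Finset.range n, |grdA a d k| ≤ ∑' k, |grdA a d k| :=
    fun n => Summable.sum_le_tsum _ (fun k _ => abs_nonneg _) hs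
  have hge : ∀ n, 2 * harm (grdK a d n) - (1 + C) ≤ ∑ k ∈ Finset.range n, |grdA a d k| := by
    intro n
    obtain ⟨hinv1, hinv2, hinv3⟩ := grd_inv hC hC0 n
    have hj1 : 1/((grdK a d n:ℝ)+1) ≤ 1 := by
      rw [div_le_one (by positivity)]
      have : (0:ℝ) ≤ (grdK a d n : ℝ) := Nat.cast_nonneg _
      linarith
    have hj0 : 0 ≤ 1/((grdK a d n:ℝ)+1) := by positivity
    have h2 : 2/((grdK a d n:ℝ)+1) = 2*(1/((grdK a d n:ℝ)+1)) := by ring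
    cases hu : grdUp a d n with
    | true =>
        have := (grd_div_inv hC hC0 n).1 hu
        linarith
    | false =>
        have := (grd_div_inv hC hC0 n).2 hu
        have hub := (hinv2 hu).2
        linarith
  have hat : Tendsto (fun n => 2 * harm (grdK a d n) - (1 + C)) atTop atTop := by
    apply tendsto_atTop_add_const_right
    exact (harm_tendsto.comp (grdK_tendsto hC hC0 hpos hneg)).const_mul_atTop (by norm_num)
  obtain ⟨n, hn⟩ := (hat.eventually_gt_atTop (∑' k, |grdA a d k|)).exists
  exact absurd (le_trans (hge n) (hbd n)) (not_le.2 hn)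

/-- Part 2: greedy selection of a conditionally convergent sub-series. -/
lemma exists_condConv_subset (ha : Tendsto a atTop (nhds 0)) :
    ∃ B : Set ℕ, (∀ n, n ∈ B → d n = true) ∧ CondConv (B.indicator a) := by
  classical
  refine ⟨{n | if grdUp a d n = true then (d n = true ∧ 0 < a n)
      else (d n = true ∧ a n < 0)}, ?_, ?_⟩
  · intro n hn
    simp only [Set.mem_setOf_eq] at hn
    split at hn <;> exact hn.1
  · have hind : Set.indicator {n | if grdUp a d n = true then (d n = true ∧ 0 < a n)
        else (d n = true ∧ a n < 0)} a = grdA a d := by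
      funext n
      rw [Set.indicator_apply]
      by_cases hu : grdUp a d n = true
      · rw [(grd_step_true hu).1, grdPos]
        simp only [Set.mem_setOf_eq, hu, if_true]
      · have hu' : grdUp a d n = false := by
          cases h : grdUp a d n
          · rfl
          · exact absurd h hu
        rw [(grd_step_false hu').1, grdNeg]
        simp [Set.mem_setOf_eq, hu']
    rw [hind]
    constructor
    · refine ⟨0, ?_⟩
      have := grdS_tendsto_zero hC hC0 hpos hneg ha
      refine this.congr ?_
      intro N
      exact grdS_eq_sum N
    · exact grd_diverges hC hC0 hpos hneg

end GrdFinal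


/-! ### Machine 3 : Riemann rearrangement -/

def upos (u : ℕ → ℝ) : ℕ → Prop := fun n => 0 ≤ u n
def uneg (u : ℕ → ℝ) : ℕ → Prop := fun n => ¬ (0 ≤ u n)

open Classical in
noncomputable def rSt (u : ℕ → ℝ) (c : ℕ × ℕ × ℝ → Prop) : ℕ → ℕ × ℕ × ℝ
  | 0 => (0, 0, 0)
  | m+1 =>
      let st := rSt u c m
      if c st then (st.1 + 1, st.2.1, st.2.2 + u (Nat.nth (upos u) st.1))
      else (st.1, st.2.1 + 1, st.2.2 + u (Nat.nth (uneg u) st.2.1))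

noncomputable def rI (u : ℕ → ℝ) (c : ℕ × ℕ × ℝ → Prop) (m : ℕ) : ℕ := (rSt u c m).1
noncomputable def rJ (u : ℕ → ℝ) (c : ℕ × ℕ × ℝ → Prop) (m : ℕ) : ℕ := (rSt u c m).2.1
noncomputable def rS (u : ℕ → ℝ) (c : ℕ × ℕ × ℝ → Prop) (m : ℕ) : ℝ := (rSt u c m).2.2
open Classical in
noncomputable def rF (u : ℕ → ℝ) (c : ℕ × ℕ × ℝ → Prop) (m : ℕ) : ℕ :=
  if c (rSt u c m) then Nat.nth (upos u) (rI u c m) else Nat.nth (uneg u) (rJ u c m)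

variable {u : ℕ → ℝ} {c : ℕ × ℕ × ℝ → Prop}

lemma rSt_succ_pos {m : ℕ} (hc : c (rSt u c m)) :
    rI u c (m+1) = rI u c m + 1 ∧ rJ u c (m+1) = rJ u c m ∧
      rS u c (m+1) = rS u c m + u (Nat.nth (upos u) (rI u c m)) ∧
      rF u c m = Nat.nth (upos u) (rI u c m) := by
  classical
  have h : rSt u c (m+1) = (rI u c m + 1, rJ u c m,
      rS u c m + u (Nat.nth (upos u) (rI u c m))) := by
    rw [show rSt u c (m+1) = (if c (rSt u c m)
      then ((rSt u c m).1 + 1, (rSt u c m).2.1,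
        (rSt u c m).2.2 + u (Nat.nth (upos u) (rSt u c m).1))
      else ((rSt u c m).1, (rSt u c m).2.1 + 1,
        (rSt u c m).2.2 + u (Nat.nth (uneg u) (rSt u c m).2.1))) from rfl, if_pos hc]
    rfl
  refine ⟨?_, ?_, ?_, ?_⟩
  · show (rSt u c (m+1)).1 = _ ; rw [h]
  · show (rSt u c (m+1)).2.1 = _ ; rw [h]
  · show (rSt u c (m+1)).2.2 = _ ; rw [h]
  · rw [rF, if_pos hc]

lemma rSt_succ_neg {m : ℕ} (hc : ¬ c (rSt u c m)) :
    rI u c (m+1) = rI u c m ∧ rJ u c (m+1) = rJ u c m + 1 ∧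
      rS u c (m+1) = rS u c m + u (Nat.nth (uneg u) (rJ u c m)) ∧
      rF u c m = Nat.nth (uneg u) (rJ u c m) := by
  classical
  have h : rSt u c (m+1) = (rI u c m, rJ u c m + 1,
      rS u c m + u (Nat.nth (uneg u) (rJ u c m))) := by
    rw [show rSt u c (m+1) = (if c (rSt u c m)
      then ((rSt u c m).1 + 1, (rSt u c m).2.1,
        (rSt u c m).2.2 + u (Nat.nth (upos u) (rSt u c m).1))
      else ((rSt u c m).1, (rSt u c m).2.1 + 1,
        (rSt u c m).2.2 + u (Nat.nth (uneg u) (rSt u c m).2.1))) from rfl, if_neg hc]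
    rfl
  refine ⟨?_, ?_, ?_, ?_⟩
  · show (rSt u c (m+1)).1 = _ ; rw [h]
  · show (rSt u c (m+1)).2.1 = _ ; rw [h]
  · show (rSt u c (m+1)).2.2 = _ ; rw [h]
  · rw [rF, if_neg hc]

lemma rS_eq_sum (N : ℕ) : rS u c N = ∑ m ∈ Finset.range N, u (rF u c m) := by
  induction N with
  | zero => simp [rS, rSt]
  | succ N ih =>
      rw [Finset.sum_range_succ, ← ih]
      by_cases hc : c (rSt u c N)
      · obtain ⟨_, _, hs, hf⟩ := rSt_succ_pos hc
        rw [hs, hf]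
      · obtain ⟨_, _, hs, hf⟩ := rSt_succ_neg hc
        rw [hs, hf]

lemma rI_mono : Monotone (rI u c) := by
  apply monotone_nat_of_le_succ
  intro m
  by_cases hc : c (rSt u c m)
  · rw [(rSt_succ_pos hc).1]; omega
  · rw [(rSt_succ_neg hc).1]

lemma rJ_mono : Monotone (rJ u c) := by
  apply monotone_nat_of_le_succ
  intro m
  by_cases hc : c (rSt u c m)
  · rw [(rSt_succ_pos hc).2.1]
  · rw [(rSt_succ_neg hc).2.1]; omega

lemma rI_step (m : ℕ) : rI u c (m+1) = rI u c m ∨ rI u c (m+1) = rI u c m + 1 := by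
  by_cases hc : c (rSt u c m)
  · exact Or.inr (rSt_succ_pos hc).1
  · exact Or.inl (rSt_succ_neg hc).1

lemma rJ_step (m : ℕ) : rJ u c (m+1) = rJ u c m ∨ rJ u c (m+1) = rJ u c m + 1 := by
  by_cases hc : c (rSt u c m)
  · exact Or.inl (rSt_succ_pos hc).2.1
  · exact Or.inr (rSt_succ_neg hc).2.1

lemma nat_exists_step {f : ℕ → ℕ} (h0 : f 0 = 0)
    (hstep : ∀ m, f (m+1) = f m ∨ f (m+1) = f m + 1)
    (hub : ∀ K : ℕ, ∃ m, K ≤ f m) (k : ℕ) :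
    ∃ m, f m = k ∧ f (m+1) = f m + 1 := by
  obtain ⟨m₁, hm₁⟩ := hub (k+1)
  have hex : ∃ m, k + 1 ≤ f m := ⟨m₁, hm₁⟩
  classical
  set m₀ := Nat.find hex with hm₀def
  have hm₀ : k + 1 ≤ f m₀ := Nat.find_spec hex
  have hne : m₀ ≠ 0 := by
    intro h
    rw [h, h0] at hm₀; omega
  set l := m₀ - 1 with hl
  have hm' : l + 1 = m₀ := by omega
  have hlt : ¬ (k + 1 ≤ f l) := Nat.find_min hex (by omega)
  have h2 : f (l + 1) = f m₀ := by rw [hm']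
  rcases hstep l with h | h
  · omega
  · exact ⟨l, by omega, by omega⟩

lemma rF_injective (hp : (setOf (upos u)).Infinite) (hq : (setOf (uneg u)).Infinite) :
    Function.Injective (rF u c) := by
  have key : ∀ {m m' : ℕ}, m < m' → rF u c m ≠ rF u c m' := by
    intro m m' hmm
    by_cases hc : c (rSt u c m) <;> by_cases hc' : c (rSt u c m')
    · rw [(rSt_succ_pos hc).2.2.2, (rSt_succ_pos hc').2.2.2]
      intro heq
      have h1 := (Nat.nth_strictMono hp).injective heq
      have h2 : rI u c (m+1) ≤ rI u c m' := rI_mono hmm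
      rw [(rSt_succ_pos hc).1] at h2
      omega
    · rw [(rSt_succ_pos hc).2.2.2, (rSt_succ_neg hc').2.2.2]
      intro heq
      have h1 : upos u (Nat.nth (upos u) (rI u c m)) := Nat.nth_mem_of_infinite hp _
      have h2 : uneg u (Nat.nth (uneg u) (rJ u c m')) := Nat.nth_mem_of_infinite hq _
      rw [heq] at h1
      exact h2 h1
    · rw [(rSt_succ_neg hc).2.2.2, (rSt_succ_pos hc').2.2.2]
      intro heq
      have h1 : uneg u (Nat.nth (uneg u) (rJ u c m)) := Nat.nth_mem_of_infinite hq _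
      have h2 : upos u (Nat.nth (upos u) (rI u c m')) := Nat.nth_mem_of_infinite hp _
      rw [heq] at h1
      exact h1 h2
    · rw [(rSt_succ_neg hc).2.2.2, (rSt_succ_neg hc').2.2.2]
      intro heq
      have h1 := (Nat.nth_strictMono hq).injective heq
      have h2 : rJ u c (m+1) ≤ rJ u c m' := rJ_mono hmm
      rw [(rSt_succ_neg hc).2.1] at h2
      omega
  intro m m' heq
  by_contra hne
  rcases Nat.lt_or_ge m m' with h | h
  · exact key h heq
  · exact key (by omega) heq.symm

lemma rF_surjective (hp : (setOf (upos u)).Infinite) (hq : (setOf (uneg u)).Infinite)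
    (hubI : ∀ K : ℕ, ∃ m, K ≤ rI u c m) (hubJ : ∀ K : ℕ, ∃ m, K ≤ rJ u c m) :
    Function.Surjective (rF u c) := by
  classical
  intro n
  by_cases hn : upos u n
  · obtain ⟨m, hm1, hm2⟩ := nat_exists_step (f := rI u c) (by simp [rI, rSt])
      rI_step hubI (Nat.count (upos u) n)
    have hc : c (rSt u c m) := by
      by_contra hc
      rw [(rSt_succ_neg hc).1] at hm2
      omega
    refine ⟨m, ?_⟩
    rw [(rSt_succ_pos hc).2.2.2, hm1]
    exact Nat.nth_count hn
  · obtain ⟨m, hm1, hm2⟩ := nat_exists_step (f := rJ u c) (by simp [rJ, rSt])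
      rJ_step hubJ (Nat.count (uneg u) n)
    have hc : ¬ c (rSt u c m) := by
      intro hc
      rw [(rSt_succ_pos hc).2.1] at hm2
      omega
    refine ⟨m, ?_⟩
    rw [(rSt_succ_neg hc).2.2.2, hm1]
    exact Nat.nth_count hn


section RiePrereq
variable {u : ℕ → ℝ}

lemma upos_infinite (hu : CondConv u) : (setOf (upos u)).Infinite := by
  intro hfin
  apply (condconv_parts hu).1
  apply summable_of_ne_finset_zero (s := hfin.toFinset)
  intro n hn
  rw [Set.Finite.mem_toFinset] at hn
  change ¬ (0 ≤ u n) at hn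
  rw [if_neg hn]

lemma uneg_infinite (hu : CondConv u) : (setOf (uneg u)).Infinite := by
  intro hfin
  apply (condconv_parts hu).2
  apply summable_of_ne_finset_zero (s := hfin.toFinset)
  intro n hn
  rw [Set.Finite.mem_toFinset] at hn
  have hn : 0 ≤ u n := not_not.1 hn
  rw [if_neg (not_lt.2 hn)]

lemma upos_nth_nonneg (hu : CondConv u) (l : ℕ) : 0 ≤ u (Nat.nth (upos u) l) :=
  Nat.nth_mem_of_infinite (upos_infinite hu) l

lemma uneg_nth_neg (hu : CondConv u) (l : ℕ) : u (Nat.nth (uneg u) l) < 0 :=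
  lt_of_not_ge (Nat.nth_mem_of_infinite (uneg_infinite hu) l)

lemma upos_nth_not_summable (hu : CondConv u) :
    ¬ Summable (fun l => u (Nat.nth (upos u) l)) := by
  intro hs
  apply (condconv_parts hu).1
  have hinj : Function.Injective (Nat.nth (upos u)) :=
    (Nat.nth_strictMono (upos_infinite hu)).injective
  have hrange : Set.range (Nat.nth (upos u)) = setOf (upos u) :=
    Nat.range_nth_of_infinite (upos_infinite hu)
  have hcomp : (fun l => u (Nat.nth (upos u) l)) =
      (fun n => if 0 ≤ u n then u n else 0) ∘ (Nat.nth (upos u)) := by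
    funext l
    simp only [Function.comp_apply, if_pos (upos_nth_nonneg hu l)]
  rw [hcomp] at hs
  refine (hinj.summable_iff ?_).1 hs
  intro n hn
  rw [hrange] at hn
  change ¬ (0 ≤ u n) at hn
  rw [if_neg hn]

lemma uneg_nth_not_summable (hu : CondConv u) :
    ¬ Summable (fun l => -(u (Nat.nth (uneg u) l))) := by
  intro hs
  apply (condconv_parts hu).2
  have hinj : Function.Injective (Nat.nth (uneg u)) :=
    (Nat.nth_strictMono (uneg_infinite hu)).injective
  have hrange : Set.range (Nat.nth (uneg u)) = setOf (uneg u) :=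
    Nat.range_nth_of_infinite (uneg_infinite hu)
  have hcomp : (fun l => -(u (Nat.nth (uneg u) l))) =
      (fun n => if u n < 0 then -u n else 0) ∘ (Nat.nth (uneg u)) := by
    funext l
    simp only [Function.comp_apply, if_pos (uneg_nth_neg hu l)]
  rw [hcomp] at hs
  refine (hinj.summable_iff ?_).1 hs
  intro n hn
  rw [hrange] at hn
  have hn : 0 ≤ u n := not_not.1 hn
  rw [if_neg (not_lt.2 hn)]

lemma condconv_neg (hu : CondConv u) : CondConv (fun n => -u n) := by
  obtain ⟨⟨l, hl⟩, hns⟩ := hu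
  constructor
  · refine ⟨-l, ?_⟩
    have := hl.neg
    refine this.congr ?_
    intro N
    rw [← Finset.sum_neg_distrib]
  · intro hs
    apply hns
    refine hs.congr ?_
    intro n
    rw [abs_neg]

end RiePrereq


section RieRun
variable {u : ℕ → ℝ} {c : ℕ × ℕ × ℝ → Prop}

lemma rie_run_pos {m₀ : ℕ} (hall : ∀ m, m₀ ≤ m → c (rSt u c m)) :
    ∀ m, m₀ ≤ m → rI u c m = rI u c m₀ + (m - m₀) ∧
      rS u c m = rS u c m₀ +
        ∑ l ∈ Finset.Ico (rI u c m₀) (rI u c m), u (Nat.nth (upos u) l) := by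
  intro m hm
  induction m, hm using Nat.le_induction with
  | base => simp
  | succ m hm ih =>
      obtain ⟨hi, hs⟩ := ih
      obtain ⟨hi', _, hs', _⟩ := rSt_succ_pos (hall m hm)
      have hle : rI u c m₀ ≤ rI u c m := by omega
      constructor
      · omega
      · rw [hs', hi', Finset.sum_Ico_succ_top hle, hs]
        ring

lemma rie_run_neg {m₀ : ℕ} (hall : ∀ m, m₀ ≤ m → ¬ c (rSt u c m)) :
    ∀ m, m₀ ≤ m → rJ u c m = rJ u c m₀ + (m - m₀) ∧
      rS u c m = rS u c m₀ -
        ∑ l ∈ Finset.Ico (rJ u c m₀) (rJ u c m), -(u (Nat.nth (uneg u) l)) := by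
  intro m hm
  induction m, hm using Nat.le_induction with
  | base => simp
  | succ m hm ih =>
      obtain ⟨hj, hs⟩ := ih
      obtain ⟨_, hj', hs', _⟩ := rSt_succ_neg (hall m hm)
      have hle : rJ u c m₀ ≤ rJ u c m := by omega
      constructor
      · omega
      · rw [hs', hj', Finset.sum_Ico_succ_top hle, hs]
        ring

lemma rI_unbounded (hc : ∀ m₀ : ℕ, ∃ m, m₀ ≤ m ∧ c (rSt u c m)) :
    ∀ K : ℕ, ∃ m, K ≤ rI u c m := by
  intro K
  induction K with
  | zero => exact ⟨0, by omega⟩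
  | succ K ih =>
      obtain ⟨m, hm⟩ := ih
      obtain ⟨m', hm1, hm2⟩ := hc m
      refine ⟨m' + 1, ?_⟩
      have h1 := (rSt_succ_pos hm2).1
      have h2 := rI_mono (u:=u) (c:=c) hm1
      omega

lemma rJ_unbounded (hc : ∀ m₀ : ℕ, ∃ m, m₀ ≤ m ∧ ¬ c (rSt u c m)) :
    ∀ K : ℕ, ∃ m, K ≤ rJ u c m := by
  intro K
  induction K with
  | zero => exact ⟨0, by omega⟩
  | succ K ih =>
      obtain ⟨m, hm⟩ := ih
      obtain ⟨m', hm1, hm2⟩ := hc m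
      refine ⟨m' + 1, ?_⟩
      have h1 := (rSt_succ_neg hm2).2.1
      have h2 := rJ_mono (u:=u) (c:=c) hm1
      omega

end RieRun


section RieReal
variable {u : ℕ → ℝ}

def cR (r : ℝ) : ℕ × ℕ × ℝ → Prop := fun st => st.2.2 ≤ r

lemma rie_exists_notc (hu : CondConv u) (r : ℝ) (m₀ : ℕ) :
    ∃ m, m₀ ≤ m ∧ ¬ cR r (rSt u (cR r) m) := by
  by_contra hcon
  push_neg at hcon
  have hrun := rie_run_pos (c := cR r) hcon
  have htail := tendsto_tail_atTop (f := fun l => u (Nat.nth (upos u) l))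
      (fun l => upos_nth_nonneg hu l) (upos_nth_not_summable hu) (rI u (cR r) m₀)
  obtain ⟨K₀, hK₀⟩ := eventually_atTop.1 (htail.eventually_gt_atTop (r - rS u (cR r) m₀))
  obtain ⟨hi, hs⟩ := hrun (m₀ + K₀) (by omega)
  have hKle : K₀ ≤ rI u (cR r) (m₀ + K₀) := by omega
  have hgt := hK₀ _ hKle
  have hc : rS u (cR r) (m₀ + K₀) ≤ r := hcon (m₀ + K₀) (by omega)
  rw [hs] at hc
  linarith

lemma rie_exists_c (hu : CondConv u) (r : ℝ) (m₀ : ℕ) :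
    ∃ m, m₀ ≤ m ∧ cR r (rSt u (cR r) m) := by
  by_contra hcon
  push_neg at hcon
  have hrun := rie_run_neg (c := cR r) hcon
  have htail := tendsto_tail_atTop (f := fun l => -(u (Nat.nth (uneg u) l)))
      (fun l => by simpa using le_of_lt (neg_pos.2 (uneg_nth_neg hu l)))
      (uneg_nth_not_summable hu) (rJ u (cR r) m₀)
  obtain ⟨K₀, hK₀⟩ := eventually_atTop.1 (htail.eventually_gt_atTop (rS u (cR r) m₀ - r))
  obtain ⟨hj, hs⟩ := hrun (m₀ + K₀) (by omega)
  have hKle : K₀ ≤ rJ u (cR r) (m₀ + K₀) := by omega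
  have hgt := hK₀ _ hKle
  have hc : ¬ (rS u (cR r) (m₀ + K₀) ≤ r) := hcon (m₀ + K₀) (by omega)
  rw [hs] at hc
  push_neg at hc
  linarith

lemma rieS_tendsto (hu : CondConv u) (r : ℝ) :
    Tendsto (rS u (cR r)) atTop (nhds r) := by
  have hIub := rI_unbounded (c := cR r) (fun m₀ => rie_exists_c hu r m₀)
  have hJub := rJ_unbounded (c := cR r) (fun m₀ => rie_exists_notc hu r m₀)
  rw [Metric.tendsto_atTop]
  intro ε₀ hε₀
  set ε := ε₀/2 with hεdef
  have hε : 0 < ε := by rw [hεdef]; linarith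
  have hsmall : ∃ n₁, ∀ n, n₁ ≤ n → |u n| < ε := by
    have h0 := (condconv_tendsto_zero hu).abs
    have h1 := h0.eventually (gt_mem_nhds (show |(0:ℝ)| < ε by simpa using hε))
    exact eventually_atTop.1 h1
  obtain ⟨n₁, hn₁⟩ := hsmall
  obtain ⟨M₁, hM₁⟩ := hIub n₁
  obtain ⟨M₂, hM₂⟩ := hJub n₁
  set M := max M₁ M₂ with hMdef
  have hIbig : ∀ m, M ≤ m → n₁ ≤ rI u (cR r) m := fun m hm =>
    le_trans hM₁ (rI_mono (le_trans (le_max_left _ _) hm))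
  have hJbig : ∀ m, M ≤ m → n₁ ≤ rJ u (cR r) m := fun m hm =>
    le_trans hM₂ (rJ_mono (le_trans (le_max_right _ _) hm))
  have hposterm : ∀ m, M ≤ m → u (Nat.nth (upos u) (rI u (cR r) m)) < ε := by
    intro m hm
    have hidx : n₁ ≤ Nat.nth (upos u) (rI u (cR r) m) :=
      le_trans (hIbig m hm) (Nat.nth_strictMono (upos_infinite hu)).le_apply
    exact lt_of_le_of_lt (le_abs_self _) (hn₁ _ hidx)
  have hnegterm : ∀ m, M ≤ m → -ε < u (Nat.nth (uneg u) (rJ u (cR r) m)) := by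
    intro m hm
    have hidx : n₁ ≤ Nat.nth (uneg u) (rJ u (cR r) m) :=
      le_trans (hJbig m hm) (Nat.nth_strictMono (uneg_infinite hu)).le_apply
    have h1 := hn₁ _ hidx
    have h2 := neg_abs_le (u (Nat.nth (uneg u) (rJ u (cR r) m)))
    linarith
  have habs : ∀ m, M ≤ m → (r - ε < rS u (cR r) m ∧ rS u (cR r) m ≤ r + ε) →
      (r - ε < rS u (cR r) (m+1) ∧ rS u (cR r) (m+1) ≤ r + ε) := by
    intro m hm hg
    obtain ⟨h1, h2⟩ := hg
    by_cases hc : cR r (rSt u (cR r) m)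
    · obtain ⟨_, _, hs, _⟩ := rSt_succ_pos hc
      have hcle : rS u (cR r) m ≤ r := hc
      have h3 := hposterm m hm
      have h0 := upos_nth_nonneg hu (rI u (cR r) m)
      rw [hs]
      constructor <;> linarith
    · obtain ⟨_, _, hs, _⟩ := rSt_succ_neg hc
      have hcgt : r < rS u (cR r) m := lt_of_not_ge hc
      have h3 := hnegterm m hm
      have h0 : u (Nat.nth (uneg u) (rJ u (cR r) m)) < 0 := uneg_nth_neg hu _
      rw [hs]
      constructor <;> linarith
  have hentry : ∃ m₁, M ≤ m₁ ∧ r - ε < rS u (cR r) m₁ ∧ rS u (cR r) m₁ ≤ r + ε := by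
    classical
    by_cases hS : rS u (cR r) M ≤ r
    · have hex : ∃ m, M ≤ m ∧ r < rS u (cR r) m := by
        obtain ⟨m, hm1, hm2⟩ := rie_exists_notc hu r M
        exact ⟨m, hm1, lt_of_not_ge hm2⟩
      set m₀ := Nat.find hex with hm₀def
      obtain ⟨hm₀1, hm₀2⟩ := Nat.find_spec hex
      have hMlt : M < m₀ := by
        rcases Nat.lt_or_ge M m₀ with h | h
        · exact h
        · exfalso
          have heq : m₀ = M := by omega
          have h3 := congrArg (rS u (cR r)) heq
          linarith
      set l := m₀ - 1 with hldef
      have hl2 : l + 1 = m₀ := by omega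
      have hlnot : ¬ (M ≤ l ∧ r < rS u (cR r) l) := Nat.find_min hex (by omega)
      have hlle : rS u (cR r) l ≤ r := by
        by_contra hcc
        exact hlnot ⟨by omega, lt_of_not_ge hcc⟩
      have hcl : cR r (rSt u (cR r) l) := hlle
      obtain ⟨_, _, hs, _⟩ := rSt_succ_pos hcl
      have hterm := hposterm l (by omega)
      refine ⟨m₀, by omega, ?_, ?_⟩
      · linarith
      · rw [← hl2, hs]
        linarith
    · have hex : ∃ m, M ≤ m ∧ rS u (cR r) m ≤ r := by
        obtain ⟨m, hm1, hm2⟩ := rie_exists_c hu r M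
        exact ⟨m, hm1, hm2⟩
      set m₀ := Nat.find hex with hm₀def
      obtain ⟨hm₀1, hm₀2⟩ := Nat.find_spec hex
      have hMlt : M < m₀ := by
        rcases Nat.lt_or_ge M m₀ with h | h
        · exact h
        · exfalso
          have heq : m₀ = M := by omega
          have h3 := congrArg (rS u (cR r)) heq
          have h4 := lt_of_not_ge hS
          linarith
      set l := m₀ - 1 with hldef
      have hl2 : l + 1 = m₀ := by omega
      have hlnot : ¬ (M ≤ l ∧ rS u (cR r) l ≤ r) := Nat.find_min hex (by omega)
      have hlgt : r < rS u (cR r) l := by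
        by_contra hcc
        exact hlnot ⟨by omega, not_lt.1 hcc⟩
      have hcl : ¬ cR r (rSt u (cR r) l) := by
        intro hcc
        exact absurd (show rS u (cR r) l ≤ r from hcc) (not_le.2 hlgt)
      obtain ⟨_, _, hs, _⟩ := rSt_succ_neg hcl
      have hterm := hnegterm l (by omega)
      refine ⟨m₀, by omega, ?_, ?_⟩
      · rw [← hl2, hs]
        linarith
      · linarith
  obtain ⟨m₁, hm₁, hgood⟩ := hentry
  have hall : ∀ m, m₁ ≤ m → r - ε < rS u (cR r) m ∧ rS u (cR r) m ≤ r + ε := by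
    intro m hm
    induction m, hm using Nat.le_induction with
    | base => exact hgood
    | succ m hm ih => exact habs m (le_trans hm₁ hm) ih
  refine ⟨m₁, fun m hm => ?_⟩
  obtain ⟨h1, h2⟩ := hall m hm
  rw [Real.dist_eq, abs_lt]
  constructor <;> [linarith; linarith]

lemma riemann_real (hu : CondConv u) (r : ℝ) :
    ∃ σ : Equiv.Perm ℕ, Tendsto (fun N => ∑ t ∈ Finset.range N, u (σ t)) atTop (nhds r) := by
  have hbij : Function.Bijective (rF u (cR r)) :=
    ⟨rF_injective (upos_infinite hu) (uneg_infinite hu),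
     rF_surjective (upos_infinite hu) (uneg_infinite hu)
       (rI_unbounded (fun m₀ => rie_exists_c hu r m₀))
       (rJ_unbounded (fun m₀ => rie_exists_notc hu r m₀))⟩
  refine ⟨Equiv.ofBijective _ hbij, ?_⟩
  have := rieS_tendsto hu r
  refine this.congr ?_
  intro N
  rw [rS_eq_sum]
  rfl

end RieReal


section RieTop
variable {u : ℕ → ℝ}

def cT : ℕ × ℕ × ℝ → Prop := fun st => st.2.2 ≤ (st.2.1 : ℝ) + 3

lemma cT_iff (m : ℕ) : cT (rSt u cT m) ↔ rS u cT m ≤ (rJ u cT m : ℝ) + 3 := Iff.rfl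

lemma rieT_exists_notc (hu : CondConv u) (m₀ : ℕ) :
    ∃ m, m₀ ≤ m ∧ ¬ cT (rSt u cT m) := by
  by_contra hcon
  push_neg at hcon
  have hrun := rie_run_pos (c := cT) hcon
  have hJconst : ∀ m, m₀ ≤ m → rJ u cT m = rJ u cT m₀ := by
    intro m hm
    induction m, hm using Nat.le_induction with
    | base => rfl
    | succ m hm ih => rw [(rSt_succ_pos (hcon m hm)).2.1, ih]
  have htail := tendsto_tail_atTop (f := fun l => u (Nat.nth (upos u) l))
      (fun l => upos_nth_nonneg hu l) (upos_nth_not_summable hu) (rI u cT m₀)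
  obtain ⟨K₀, hK₀⟩ := eventually_atTop.1
    (htail.eventually_gt_atTop ((rJ u cT m₀ : ℝ) + 3 - rS u cT m₀))
  obtain ⟨hi, hs⟩ := hrun (m₀ + K₀) (by omega)
  have hKle : K₀ ≤ rI u cT (m₀ + K₀) := by omega
  have hgt := hK₀ _ hKle
  have hc : rS u cT (m₀ + K₀) ≤ (rJ u cT (m₀ + K₀) : ℝ) + 3 := hcon (m₀ + K₀) (by omega)
  rw [hJconst (m₀ + K₀) (by omega), hs] at hc
  linarith

lemma rieT_exists_c (hu : CondConv u) (m₀ : ℕ) :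
    ∃ m, m₀ ≤ m ∧ cT (rSt u cT m) := by
  by_contra hcon
  push_neg at hcon
  have hrun := rie_run_neg (c := cT) hcon
  obtain ⟨K, hK⟩ := exists_nat_gt (rS u cT m₀ - (rJ u cT m₀ : ℝ) - 3)
  obtain ⟨hj, hs⟩ := hrun (m₀ + K) (by omega)
  have hc : ¬ (rS u cT (m₀ + K) ≤ (rJ u cT (m₀ + K) : ℝ) + 3) := hcon (m₀ + K) (by omega)
  push_neg at hc
  have hsum : 0 ≤ ∑ l ∈ Finset.Ico (rJ u cT m₀) (rJ u cT (m₀ + K)),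
      -(u (Nat.nth (uneg u) l)) :=
    Finset.sum_nonneg fun l _ => le_of_lt (neg_pos.2 (uneg_nth_neg hu l))
  have hsle : rS u cT (m₀ + K) ≤ rS u cT m₀ := by rw [hs]; linarith
  have hjcast : (rJ u cT (m₀ + K) : ℝ) = (rJ u cT m₀ : ℝ) + K := by
    rw [hj, show m₀ + K - m₀ = K from by omega]; push_cast; ring
  rw [hjcast] at hc
  linarith

lemma rieT_lb {C : ℝ} (hu : CondConv u) (hC : ∀ n, |u n| ≤ C) (hC2 : 2 ≤ C) (m : ℕ) :
    (rJ u cT m : ℝ) + 2 - C ≤ rS u cT m := by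
  induction m with
  | zero =>
      have h1 : rJ u cT 0 = 0 := by simp [rJ, rSt]
      have h2 : rS u cT 0 = 0 := by simp [rS, rSt]
      rw [h1, h2]
      norm_num
      linarith
  | succ m ih =>
      by_cases hc : cT (rSt u cT m)
      · obtain ⟨_, hj, hs, _⟩ := rSt_succ_pos hc
        rw [hj, hs]
        have := upos_nth_nonneg hu (rI u cT m)
        linarith
      · obtain ⟨_, hj, hs, _⟩ := rSt_succ_neg hc
        have hgt : (rJ u cT m : ℝ) + 3 < rS u cT m := lt_of_not_ge hc
        have hterm : -C ≤ u (Nat.nth (uneg u) (rJ u cT m)) := by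
          have := hC (Nat.nth (uneg u) (rJ u cT m))
          have := neg_abs_le (u (Nat.nth (uneg u) (rJ u cT m)))
          linarith
        rw [hj, hs]
        push_cast
        linarith

lemma rieT_tendsto (hu : CondConv u) : Tendsto (rS u cT) atTop atTop := by
  obtain ⟨C, hC2, hC⟩ := condconv_bounded hu
  have hJub := rJ_unbounded (c := cT) (fun m₀ => rieT_exists_notc hu m₀)
  have hJmono : Monotone (rJ u cT) := rJ_mono
  have hJtend : Tendsto (rJ u cT) atTop atTop := by
    apply tendsto_atTop_atTop_of_monotone hJmono
    intro b
    obtain ⟨m, hm⟩ := hJub b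
    exact ⟨m, hm⟩
  have hcast : Tendsto (fun m => (rJ u cT m : ℝ) + 2 - C) atTop atTop := by
    apply tendsto_atTop_add_const_right
    apply tendsto_atTop_add_const_right
    exact tendsto_natCast_atTop_atTop.comp hJtend
  exact tendsto_atTop_mono (rieT_lb hu hC hC2) hcast

lemma riemann_top (hu : CondConv u) :
    ∃ σ : Equiv.Perm ℕ, Tendsto (fun N => ∑ t ∈ Finset.range N, u (σ t)) atTop atTop := by
  have hbij : Function.Bijective (rF u cT) :=
    ⟨rF_injective (upos_infinite hu) (uneg_infinite hu),
     rF_surjective (upos_infinite hu) (uneg_infinite hu)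
       (rI_unbounded (fun m₀ => rieT_exists_c hu m₀))
       (rJ_unbounded (fun m₀ => rieT_exists_notc hu m₀))⟩
  refine ⟨Equiv.ofBijective _ hbij, ?_⟩
  have := rieT_tendsto hu
  refine this.congr ?_
  intro N
  rw [rS_eq_sum]
  rfl

lemma riemann (hu : CondConv u) (r : EReal) :
    ∃ σ : Equiv.Perm ℕ,
      Tendsto (fun N => ((∑ t ∈ Finset.range N, u (σ t) : ℝ) : EReal)) atTop (nhds r) := by
  induction r using EReal.rec with
  | bot =>
      obtain ⟨σ, hσ⟩ := riemann_top (condconv_neg hu)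
      refine ⟨σ, ?_⟩
      apply ereal_tendsto_bot
      have : Tendsto (fun N => -∑ t ∈ Finset.range N, u (σ t)) atTop atTop := by
        refine hσ.congr ?_
        intro N
        rw [← Finset.sum_neg_distrib]
      exact tendsto_neg_atTop_iff.1 this
  | coe x =>
      obtain ⟨σ, hσ⟩ := riemann_real hu x
      exact ⟨σ, EReal.tendsto_coe.2 hσ⟩
  | top =>
      obtain ⟨σ, hσ⟩ := riemann_top hu
      exact ⟨σ, ereal_tendsto_top hσ⟩

end RieTop


/-! ### Assembly helpers -/

section Assembly
variable {a : ℕ → ℝ} {A : Set ℕ}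

lemma indicator_abs (A : Set ℕ) (a : ℕ → ℝ) :
    (fun n => |A.indicator a n|) = A.indicator (fun n => |a n|) := by
  classical
  funext n
  rw [Set.indicator_apply, Set.indicator_apply]
  split
  · rfl
  · exact abs_zero

lemma infinite_of_condconv_indicator (h : CondConv (A.indicator a)) : A.Infinite := by
  intro hfin
  apply h.2
  apply summable_of_ne_finset_zero (s := hfin.toFinset)
  intro n hn
  rw [Set.Finite.mem_toFinset] at hn
  rw [Set.indicator_of_notMem hn, abs_zero]

lemma indicator_eq_ite [DecidablePred (· ∈ A)] (n : ℕ) :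
    A.indicator a n = if n ∈ A then a n else 0 := by
  rw [Set.indicator_apply]

lemma condconv_subseries [DecidablePred (· ∈ A)] (h : CondConv (A.indicator a)) :
    CondConv (fun k => a (Nat.nth (· ∈ A) k)) := by
  have hinf : A.Infinite := infinite_of_condconv_indicator h
  have hinf' : (setOf (· ∈ A)).Infinite := hinf
  obtain ⟨⟨l, hl⟩, hns⟩ := h
  have hkey : ∀ N, ∑ k ∈ Finset.range N, a (Nat.nth (· ∈ A) k)
      = ∑ n ∈ Finset.range (Nat.nth (· ∈ A) N), A.indicator a n := by
    intro N
    have h1 := sum_filter_eq_count a (· ∈ A) (Nat.nth (· ∈ A) N)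
    have h2 : Nat.count (· ∈ A) (Nat.nth (· ∈ A) N) = N :=
      Nat.count_nth (fun hf => (hinf' hf).elim)
    rw [h2] at h1
    rw [← h1]
    exact Finset.sum_congr rfl fun n _ => (indicator_eq_ite n).symm
  constructor
  · refine ⟨l, ?_⟩
    have hcomp : Tendsto (fun N => ∑ n ∈ Finset.range (Nat.nth (· ∈ A) N),
        A.indicator a n) atTop (nhds l) :=
      hl.comp ((Nat.nth_strictMono hinf').tendsto_atTop)
    refine hcomp.congr ?_
    intro N
    rw [hkey]
  · intro hs
    apply hns
    have hinj : Function.Injective (Nat.nth (· ∈ A)) :=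
      (Nat.nth_strictMono hinf').injective
    have hcomp : (fun k => |a (Nat.nth (· ∈ A) k)|) =
        (fun n => |A.indicator a n|) ∘ (Nat.nth (· ∈ A)) := by
      funext k
      have hmem : Nat.nth (· ∈ A) k ∈ A := Nat.nth_mem_of_infinite hinf' k
      simp only [Function.comp_apply, Set.indicator_of_mem hmem]
    rw [indicator_abs]
    refine (hinj.summable_iff ?_).1 ?_
    · intro n hn
      rw [Nat.range_nth_of_infinite hinf'] at hn
      exact Set.indicator_of_notMem hn _
    · rw [indicator_abs] at hcomp
      rw [← hcomp]
      exact hs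

lemma perm_of_subset [DecidablePred (· ∈ A)] (hinf : A.Infinite) (σ : Equiv.Perm ℕ) :
    ∃ π : Equiv.Perm ℕ, (∀ n, n ∉ A → π n = n) ∧
      ∀ (b : ℕ → ℝ) (N : ℕ), ∑ n ∈ Finset.range N, b (π n) =
        (∑ k ∈ Finset.range (Nat.count (· ∈ A) N), b (Nat.nth (· ∈ A) (σ k)))
          + ∑ n ∈ Finset.range N, (Aᶜ.indicator b) n := by
  have hinf' : (setOf (· ∈ A)).Infinite := hinf
  have hnth_mem : ∀ k, Nat.nth (· ∈ A) k ∈ A := fun k => Nat.nth_mem_of_infinite hinf' k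
  have hcount_nth : ∀ k, Nat.count (· ∈ A) (Nat.nth (· ∈ A) k) = k :=
    fun k => Nat.count_nth (fun hf => (hinf' hf).elim)
  set f : ℕ → ℕ :=
    fun n => if n ∈ A then Nat.nth (· ∈ A) (σ (Nat.count (· ∈ A) n)) else n with hfdef
  set g : ℕ → ℕ :=
    fun n => if n ∈ A then Nat.nth (· ∈ A) (σ.symm (Nat.count (· ∈ A) n)) else n with hgdef
  have hfn : ∀ n ∈ A, f n = Nat.nth (· ∈ A) (σ (Nat.count (· ∈ A) n)) := by
    intro n hn; rw [hfdef]; simp only [if_pos hn]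
  have hfn' : ∀ n, n ∉ A → f n = n := by
    intro n hn; rw [hfdef]; simp only [if_neg hn]
  have hgn : ∀ n ∈ A, g n = Nat.nth (· ∈ A) (σ.symm (Nat.count (· ∈ A) n)) := by
    intro n hn; rw [hgdef]; simp only [if_pos hn]
  have hgn' : ∀ n, n ∉ A → g n = n := by
    intro n hn; rw [hgdef]; simp only [if_neg hn]
  have hleft : Function.LeftInverse g f := by
    intro n
    by_cases hn : n ∈ A
    · rw [hfn n hn, hgn _ (hnth_mem _), hcount_nth, Equiv.symm_apply_apply, Nat.nth_count hn]
    · rw [hfn' n hn, hgn' n hn]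
  have hright : Function.RightInverse g f := by
    intro n
    by_cases hn : n ∈ A
    · rw [hgn n hn, hfn _ (hnth_mem _), hcount_nth, Equiv.apply_symm_apply, Nat.nth_count hn]
    · rw [hgn' n hn, hfn' n hn]
  refine ⟨⟨f, g, hleft, hright⟩, fun n hn => hfn' n hn, ?_⟩
  intro b N
  induction N with
  | zero => simp
  | succ N ih =>
      have houter : ∑ n ∈ Finset.range (N+1),
          b ((⟨f, g, hleft, hright⟩ : Equiv.Perm ℕ) n)
          = (∑ n ∈ Finset.range N, b ((⟨f, g, hleft, hright⟩ : Equiv.Perm ℕ) n)) + b (f N) :=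
        Finset.sum_range_succ _ _
      have h3 : ∑ n ∈ Finset.range (N+1), (Aᶜ.indicator b) n
          = (∑ n ∈ Finset.range N, (Aᶜ.indicator b) n) + (Aᶜ.indicator b) N :=
        Finset.sum_range_succ _ _
      by_cases hn : N ∈ A
      · have h4 : ∑ k ∈ Finset.range (Nat.count (· ∈ A) (N+1)), b (Nat.nth (· ∈ A) (σ k))
            = (∑ k ∈ Finset.range (Nat.count (· ∈ A) N), b (Nat.nth (· ∈ A) (σ k)))
              + b (Nat.nth (· ∈ A) (σ (Nat.count (· ∈ A) N))) := by
          rw [Nat.count_succ, if_pos hn, Finset.sum_range_succ]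
        have h5 : (Aᶜ.indicator b) N = 0 :=
          Set.indicator_of_notMem (by simpa using hn) _
        rw [houter, ih, h3, h4, h5, hfn N hn]
        ring
      · have h4 : Nat.count (· ∈ A) (N+1) = Nat.count (· ∈ A) N := by
          rw [Nat.count_succ, if_neg hn]
          omega
        have h5 : (Aᶜ.indicator b) N = b N :=
          Set.indicator_of_mem (by simpa using hn) _
        rw [houter, ih, h3, h4, h5, hfn' N hn]
        ring

end Assembly


section Invariance
variable {a : ℕ → ℝ}

lemma tendsto_perm_of_summable_support {l : ℝ}
    (hl : Tendsto (fun N => ∑ n ∈ Finset.range N, a n) atTop (nhds l))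
    (π : Equiv.Perm ℕ) {D : Set ℕ} (hD : ∀ n, π n ≠ n → n ∈ D)
    (hsum : Summable (D.indicator fun n => |a n|)) :
    Tendsto (fun N => ∑ n ∈ Finset.range N, a (π n)) atTop (nhds l) := by
  classical
  have hfix : ∀ n, n ∉ D → π n = n := by
    intro n hn
    by_contra hc
    exact hn (hD n hc)
  have hmem : ∀ n, n ∈ D ↔ π n ∈ D := by
    intro n
    constructor
    · intro hn
      by_contra hc
      have h1 : π (π n) = π n := hfix _ hc
      have h2 : π n = n := π.injective h1
      rw [h2] at hc
      exact hc hn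
    · intro hn
      by_contra hc
      have h1 : π n = n := hfix _ hc
      rw [h1] at hn
      exact hc hn
  have hsum1 : Summable (D.indicator a) := by
    apply Summable.of_abs
    rw [indicator_abs]
    exact hsum
  have hsum2 : Summable (fun n => (D.indicator a) (π n)) :=
    (π.summable_iff (f := D.indicator a)).2 hsum1
  have htsum : ∑' n, (D.indicator a) (π n) = ∑' n, (D.indicator a) n :=
    π.tsum_eq (D.indicator a)
  have hpt : ∀ n, a (π n) = a n + ((D.indicator a) (π n) - (D.indicator a) n) := by
    intro n
    by_cases hn : n ∈ D
    · have hπn : π n ∈ D := (hmem n).1 hn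
      rw [Set.indicator_of_mem hπn, Set.indicator_of_mem hn]
      ring
    · have hπ : π n = n := hfix n hn
      rw [hπ, Set.indicator_of_notMem hn]
      ring
  have hdiff : Tendsto (fun N => ∑ n ∈ Finset.range N,
      ((D.indicator a) (π n) - (D.indicator a) n)) atTop (nhds 0) := by
    have h1 := (hsum2.hasSum.sub hsum1.hasSum).tendsto_sum_nat
    rw [htsum, sub_self] at h1
    exact h1
  have := hl.add hdiff
  rw [add_zero] at this
  refine this.congr ?_
  intro N
  rw [← Finset.sum_add_distrib]
  exact (Finset.sum_congr rfl fun n _ => (hpt n).symm)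

end Invariance


section Implications

lemma riemann_bot {u : ℕ → ℝ} (hu : CondConv u) :
    ∃ σ : Equiv.Perm ℕ, Tendsto (fun N => ∑ t ∈ Finset.range N, u (σ t)) atTop atBot := by
  obtain ⟨σ, hσ⟩ := riemann_top (condconv_neg hu)
  refine ⟨σ, ?_⟩
  have h2 : Tendsto (fun N => -∑ t ∈ Finset.range N, u (σ t)) atTop atTop := by
    refine hσ.congr ?_
    intro N
    rw [← Finset.sum_neg_distrib]
  exact tendsto_neg_atTop_iff.1 h2

lemma W_implies_R {I : Set (Set ℕ)} (hI : IsIdeal I) (hW : PropertyW I) : PropertyR I := by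
  intro a hCC r
  obtain ⟨A, hAI, hCA⟩ := hW a hCC
  classical
  haveI : DecidablePred (· ∈ A) := Classical.decPred _
  have hinf : A.Infinite := infinite_of_condconv_indicator hCA
  have hinf' : (setOf (· ∈ A)).Infinite := hinf
  have hu : CondConv (fun k => a (Nat.nth (· ∈ A) k)) := condconv_subseries hCA
  obtain ⟨l, hl⟩ := hCC.1
  obtain ⟨lb, hlb⟩ := hCA.1
  have hcompl : Tendsto (fun N => ∑ n ∈ Finset.range N, (Aᶜ.indicator a) n) atTop
      (nhds (l - lb)) := by
    have h1 := hl.sub hlb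
    refine h1.congr ?_
    intro N
    rw [← Finset.sum_sub_distrib]
    refine Finset.sum_congr rfl fun n _ => ?_
    rw [Set.indicator_compl]
    rfl
  have hcount := count_tendsto_atTop (p := (· ∈ A)) hinf'
  have hsupp : ∀ (π : Equiv.Perm ℕ), (∀ n, n ∉ A → π n = n) → {n : ℕ | π n ≠ n} ∈ I := by
    intro π hfix
    refine hI.2.2.2 _ A ?_ hAI
    intro n hn
    by_contra hc
    exact hn (hfix n hc)
  induction r using EReal.rec with
  | coe x =>
      obtain ⟨σ, hσ⟩ := riemann_real hu (x - (l - lb))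
      obtain ⟨π, hπfix, hπsum⟩ := perm_of_subset hinf σ
      refine ⟨π, ?_, hsupp π hπfix⟩
      rw [show ((x : EReal)) = (((x : ℝ) : EReal)) from rfl]
      rw [EReal.tendsto_coe]
      have h2 : Tendsto (fun N => ∑ k ∈ Finset.range (Nat.count (· ∈ A) N),
          a (Nat.nth (· ∈ A) (σ k))) atTop (nhds (x - (l - lb))) := hσ.comp hcount
      have h3 := h2.add hcompl
      have heq : x - (l - lb) + (l - lb) = x := by ring
      rw [heq] at h3
      refine h3.congr ?_
      intro N
      exact (hπsum a N).symm
  | top =>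
      obtain ⟨σ, hσ⟩ := riemann_top hu
      obtain ⟨π, hπfix, hπsum⟩ := perm_of_subset hinf σ
      refine ⟨π, ?_, hsupp π hπfix⟩
      apply ereal_tendsto_top
      have h2 : Tendsto (fun N => ∑ k ∈ Finset.range (Nat.count (· ∈ A) N),
          a (Nat.nth (· ∈ A) (σ k))) atTop atTop := hσ.comp hcount
      have h3 := h2.atTop_add hcompl
      refine h3.congr ?_
      intro N
      exact (hπsum a N).symm
  | bot =>
      obtain ⟨σ, hσ⟩ := riemann_bot hu
      obtain ⟨π, hπfix, hπsum⟩ := perm_of_subset hinf σ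
      refine ⟨π, ?_, hsupp π hπfix⟩
      apply ereal_tendsto_bot
      have h2 : Tendsto (fun N => ∑ k ∈ Finset.range (Nat.count (· ∈ A) N),
          a (Nat.nth (· ∈ A) (σ k))) atTop atBot := hσ.comp hcount
      have h3 := h2.atBot_add hcompl
      refine h3.congr ?_
      intro N
      exact (hπsum a N).symm

lemma R_implies_noext {I : Set (Set ℕ)} (hR : PropertyR I) : ¬ ExtendsToSummable I := by
  rintro ⟨f, hf0, hfns, hsub⟩
  obtain ⟨a, hCC, hle⟩ := exists_condConv_le hf0 hfns
  obtain ⟨π, hπt, hπI⟩ := hR a hCC ⊤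
  have hDJ := hsub hπI
  have hsumD : Summable (Set.indicator {n : ℕ | π n ≠ n} fun n => |a n|) := by
    rw [← summable_subtype_iff_indicator]
    exact Summable.of_nonneg_of_le (fun n => abs_nonneg _) (fun n => hle n) hDJ
  obtain ⟨l, hl⟩ := hCC.1
  have hreal := tendsto_perm_of_summable_support hl π (fun n hn => hn) hsumD
  have hcoe : Tendsto (fun N => ((∑ n ∈ Finset.range N, a (π n) : ℝ) : EReal)) atTop
      (nhds ((l : ℝ) : EReal)) := EReal.tendsto_coe.2 hreal
  exact EReal.coe_ne_top l (tendsto_nhds_unique hcoe hπt)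

lemma W_implies_noext {I : Set (Set ℕ)} (hW : PropertyW I) : ¬ ExtendsToSummable I := by
  rintro ⟨f, hf0, hfns, hsub⟩
  obtain ⟨a, hCC, hle⟩ := exists_condConv_le hf0 hfns
  obtain ⟨A, hAI, hCA⟩ := hW a hCC
  have hfa := hsub hAI
  have hind : Summable (A.indicator fun n => |a n|) := by
    rw [← summable_subtype_iff_indicator]
    exact Summable.of_nonneg_of_le (fun n => abs_nonneg _) (fun n => hle n) hfa
  apply hCA.2
  rw [indicator_abs]
  exact hind

lemma noext_implies_W {I : Set (Set ℕ)} (hI : IsIdeal I) (hne : ¬ ExtendsToSummable I) :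
    PropertyW I := by
  intro a hCC
  classical
  obtain ⟨hp_ns, hm_ns⟩ := condconv_parts hCC
  have hfp0 : ∀ n, (0:ℝ) ≤ (if 0 ≤ a n then a n else 0) := by
    intro n
    by_cases h : 0 ≤ a n
    · rw [if_pos h]; exact h
    · rw [if_neg h]
  have hfm0 : ∀ n, (0:ℝ) ≤ (if a n < 0 then -a n else 0) := by
    intro n
    by_cases h : a n < 0
    · rw [if_pos h]; linarith
    · rw [if_neg h]
  have h1 : ¬ (I ⊆ {A : Set ℕ | Summable fun n : ↥A => (if 0 ≤ a ↑n then a ↑n else 0)}) :=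
    fun hsub => hne ⟨_, hfp0, hp_ns, hsub⟩
  have h2 : ¬ (I ⊆ {A : Set ℕ | Summable fun n : ↥A => (if a ↑n < 0 then -a ↑n else 0)}) :=
    fun hsub => hne ⟨_, hfm0, hm_ns, hsub⟩
  obtain ⟨A₁, hA₁I, hA₁⟩ := Set.not_subset.1 h1
  obtain ⟨A₂, hA₂I, hA₂⟩ := Set.not_subset.1 h2
  set A := A₁ ∪ A₂ with hAdef
  have hAI : A ∈ I := hI.2.2.1 _ _ hA₁I hA₂I
  set d : ℕ → Bool := fun n => if n ∈ A then true else false with hd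
  have hdmem : ∀ n, d n = true ↔ n ∈ A := by
    intro n
    by_cases h : n ∈ A
    · simp [hd, h]
    · simp [hd, h]
  obtain ⟨C, hC2, hC⟩ := condconv_bounded hCC
  have hC0 : (0:ℝ) ≤ C := by linarith
  have hpos : ¬ Summable (grdPos a d) := by
    intro hs
    apply hA₁
    have hind : Summable (A₁.indicator (fun n => if 0 ≤ a n then a n else 0)) := by
      refine Summable.of_nonneg_of_le ?_ ?_ hs
      · intro n
        exact Set.indicator_nonneg (fun m _ => hfp0 m) n
      · intro n
        by_cases hmem : n ∈ A₁
        · rw [Set.indicator_of_mem hmem]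
          by_cases hlt : 0 < a n
          · rw [if_pos (le_of_lt hlt), grdPos,
              if_pos ⟨(hdmem n).2 (Or.inl hmem), hlt⟩]
          · have hz : (if 0 ≤ a n then a n else 0) ≤ 0 := by
              by_cases h0 : 0 ≤ a n
              · rw [if_pos h0]; linarith [not_lt.1 hlt]
              · rw [if_neg h0]
            exact le_trans hz (grdPos_nonneg n)
        · rw [Set.indicator_of_notMem hmem]
          exact grdPos_nonneg n
    rw [← summable_subtype_iff_indicator] at hind
    exact hind
  have hneg : ¬ Summable (fun n => -(grdNeg a d n)) := by
    intro hs
    apply hA₂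
    have hind : Summable (A₂.indicator (fun n => if a n < 0 then -a n else 0)) := by
      refine Summable.of_nonneg_of_le ?_ ?_ hs
      · intro n
        exact Set.indicator_nonneg (fun m _ => hfm0 m) n
      · intro n
        by_cases hmem : n ∈ A₂
        · rw [Set.indicator_of_mem hmem]
          by_cases hlt : a n < 0
          · rw [if_pos hlt, grdNeg, if_pos ⟨(hdmem n).2 (Or.inr hmem), hlt⟩]
          · have hz : (if a n < 0 then -a n else 0) ≤ 0 := by rw [if_neg hlt]
            refine le_trans hz ?_
            have := grdNeg_nonpos (a := a) (d := d) n
            linarith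
        · rw [Set.indicator_of_notMem hmem]
          have := grdNeg_nonpos (a := a) (d := d) n
          linarith
    rw [← summable_subtype_iff_indicator] at hind
    exact hind
  obtain ⟨B, hBd, hBcc⟩ :=
    exists_condConv_subset hC hC0 hpos hneg (condconv_tendsto_zero hCC)
  exact ⟨B, hI.2.2.2 B A (fun n hn => (hdmem n).1 (hBd n hn)) hAI, hBcc⟩

end Implications

end FS

theorem property_R_iff_no_summable_ext_iff_W (I : Set (Set ℕ)) (hI : IsIdeal I)
    (hfin : ContainsFin I) :
    (PropertyR I ↔ ¬ ExtendsToSummable I) ∧ (¬ ExtendsToSummable I ↔ PropertyW I) :=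
  ⟨⟨fun hR => FS.R_implies_noext hR,
    fun h => FS.W_implies_R hI (FS.noext_implies_W hI h)⟩,
   ⟨fun h => FS.noext_implies_W hI h, fun hW => FS.W_implies_noext hW⟩⟩
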